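/- arXiv:2504.07045 — 5 statements merged into one kernel-verified Lean document; each statement's English description precedes it below -/
import Mathlib

section
/- Let I = ⟨x1 x2, x2 x3², x3 x4, x4² x5, x5 x1⟩ ⊆ K[x1,...,x5] (a support-2 monomial ideal whose underlying graph is the 5-cycle). Then I has the minimal primary decomposition I = ⟨x1,x2,x4⟩ ∩ ⟨x2,x3,x5⟩ ∩ ⟨x2,x4,x5⟩ ∩ ⟨x1,x3,x5⟩ ∩ ⟨x1, x3², x3 x4, x4²⟩, and I^{(s)} = I^s for all s ≥ 1. -/
set_option synthInstance.maxHeartbeats 1000000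
set_option maxHeartbeats 1000000

open MvPolynomial

section Defs

variable {K : Type*} [Field K] {σ : Type*}

/-- `I` is a monomial ideal. -/
def IsMonomialIdeal (I : Ideal (MvPolynomial σ K)) : Prop :=
  ∃ A : Set (σ →₀ ℕ), I = Ideal.span ((fun a => (monomial a (1 : K) : MvPolynomial σ K)) '' A)

/-- Exponent vectors of the minimal monomial generators of `I`. -/
def minGens (I : Ideal (MvPolynomial σ K)) : Set (σ →₀ ℕ) :=
  {a | (monomial a (1 : K) : MvPolynomial σ K) ∈ I ∧
    ∀ b : σ →₀ ℕ, (monomial b (1 : K) : MvPolynomial σ K) ∈ I → b ≤ a → b = a}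

/-- A support-2 monomial ideal: every minimal monomial generator is supported
on exactly two variables. -/
def IsSupportTwo (I : Ideal (MvPolynomial σ K)) : Prop :=
  ∀ a ∈ minGens I, a.support.card = 2

variable [DecidableEq σ]

/-- Minimal monomial generators of `I` supported on `{i, j}`. -/
def supportedOn (I : Ideal (MvPolynomial σ K)) (i j : σ) : Set (σ →₀ ℕ) :=
  {a | a ∈ minGens I ∧ a.support = {i, j}}

/-- `ν_{i,j}`: the minimum exponent of `x_i` among the minimal generators of `I`
supported on `{i, j}`. -/
noncomputable def nuExp (I : Ideal (MvPolynomial σ K)) (i j : σ) : ℕ :=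
  sInf ((fun a => a i) '' supportedOn I i j)

/-- `μ_{i,j}`: the maximum exponent of `x_i` among the minimal generators of `I`
supported on `{i, j}`. -/
noncomputable def muExp (I : Ideal (MvPolynomial σ K)) (i j : σ) : ℕ :=
  sSup ((fun a => a i) '' supportedOn I i j)

/-- The underlying simple graph `G(I)` of a support-2 monomial ideal. -/
def underGraph (I : Ideal (MvPolynomial σ K)) : SimpleGraph σ where
  Adj i j := i ≠ j ∧ (supportedOn I i j).Nonempty
  symm := ⟨by
    rintro i j ⟨hij, a, hmin, hs⟩
    exact ⟨hij.symm, a, hmin, by rw [hs, Finset.pair_comm]⟩⟩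
  loopless := ⟨fun i h => h.1 rfl⟩

end Defs

section Symbolic

variable {R : Type*} [CommRing R]

/-- The component of `I` at a prime `P`, namely `I S_P ∩ S`. -/
noncomputable def localizedComponent (I P : Ideal R) (hP : P.IsPrime) : Ideal R :=
  letI := hP
  (I.map (algebraMap R (Localization.AtPrime P))).comap
    (algebraMap R (Localization.AtPrime P))

/-- The `s`-th symbolic power `I^{(s)} = ⋂_{P ∈ MinAss(I)} (I^s S_P ∩ S)`. -/
noncomputable def symbolicPower (I : Ideal R) (s : ℕ) : Ideal R :=
  ⨅ P : I.minimalPrimes, localizedComponent (I ^ s) P.1 P.2.1.1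

/-- A Simis ideal: `I^{(s)} = I^s` for all `s ≥ 1`. -/
def IsSimis (I : Ideal R) : Prop := ∀ s : ℕ, 1 ≤ s → symbolicPower I s = I ^ s

/-- `I` has no embedded associated primes. -/
def NoEmbeddedPrimes (I : Ideal R) : Prop :=
  ∀ P ∈ associatedPrimes R (R ⧸ I), P ∈ I.minimalPrimes

end Symbolic

section Decomp

variable {K : Type*} [Field K] {σ : Type*}

/-- An irreducible monomial ideal: generated by pure powers of variables. -/
def IsIrredMonomialIdeal (Q : Ideal (MvPolynomial σ K)) : Prop :=
  ∃ (t : Finset σ) (e : σ → ℕ), (∀ i ∈ t, 1 ≤ e i) ∧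
    Q = Ideal.span ((fun i => (X i : MvPolynomial σ K) ^ e i) '' t)

/-- `I` has a minimal (irredundant, distinct radicals) irreducible decomposition. -/
def HasMinimalIrredDecomp (I : Ideal (MvPolynomial σ K)) : Prop :=
  ∃ (r : ℕ) (Q : Fin r → Ideal (MvPolynomial σ K)),
    (∀ k, IsIrredMonomialIdeal (Q k)) ∧ I = ⨅ k, Q k ∧
    (∀ k, (⨅ l ∈ ({k}ᶜ : Set (Fin r)), Q l) ≠ I) ∧
    (∀ k l, k ≠ l → (Q k).radical ≠ (Q l).radical)

/-- The ideal obtained from `J` by the standard linear weighting `x_i ↦ x_i^{d_i}`. -/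
noncomputable def weightedIdeal (d : σ → ℕ) (J : Ideal (MvPolynomial σ K)) : Ideal (MvPolynomial σ K) :=
  Ideal.span {m | ∃ a ∈ minGens J, ∃ b : σ →₀ ℕ,
    (∀ i, b i = d i * a i) ∧ m = (monomial b (1 : K) : MvPolynomial σ K)}

/-- `I` has a standard linear weighting: there are `d_i ≥ 1` such that every
minimal generator supported on `{i,j}` is `x_i^{d_i} x_j^{d_j}`. -/
def HasStdWeighting (I : Ideal (MvPolynomial σ K)) : Prop :=
  ∃ d : σ → ℕ, (∀ i, 1 ≤ d i) ∧ ∀ a ∈ minGens I, ∀ i ∈ a.support, a i = d i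

variable (K) in
/-- The edge ideal of a simple graph. -/
noncomputable def edgeIdeal (G : SimpleGraph σ) : Ideal (MvPolynomial σ K) :=
  Ideal.span {m | ∃ i j, G.Adj i j ∧ m = (X i * X j : MvPolynomial σ K)}

end Decomp

section Graph

variable {σ : Type*}

/-- A vertex cover of a simple graph. -/
def IsVertexCover (G : SimpleGraph σ) (C : Set σ) : Prop :=
  ∀ ⦃i j⦄, G.Adj i j → i ∈ C ∨ j ∈ C

/-- A minimal vertex cover of a simple graph. -/
def IsMinimalVertexCover (G : SimpleGraph σ) (C : Set σ) : Prop :=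
  IsVertexCover G C ∧ ∀ D ⊆ C, IsVertexCover G D → D = C

end Graph

section CM

variable {K : Type*} [Field K] {σ : Type*}

/-- The depth of `S/I` with respect to the irrelevant maximal ideal
`⟨x_1, …, x_n⟩`: the supremum of lengths of regular sequences on `S/I`
consisting of elements of that ideal. -/
noncomputable def quotDepth (I : Ideal (MvPolynomial σ K)) : ℕ∞ :=
  sSup {n : ℕ∞ | ∃ rs : List (MvPolynomial σ K), (rs.length : ℕ∞) = n ∧
    (∀ r ∈ rs, r ∈ Ideal.span (Set.range (X : σ → MvPolynomial σ K))) ∧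
    RingTheory.Sequence.IsRegular (MvPolynomial σ K ⧸ I)
      (rs.map (Ideal.Quotient.mk I))}

/-- `S/I` is Cohen–Macaulay: depth equals Krull dimension. -/
def IsCohenMacaulayQuot (I : Ideal (MvPolynomial σ K)) : Prop :=
  (quotDepth I : WithBot ℕ∞) = ringKrullDim (MvPolynomial σ K ⧸ I)

/-- The height of a prime ideal, as the Krull dimension of the localization. -/
noncomputable def primeHeight' {R : Type*} [CommRing R] (P : Ideal R) (hP : P.IsPrime) :
    WithBot ℕ∞ :=
  letI := hP
  ringKrullDim (Localization.AtPrime P)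

/-- `I` is unmixed: all associated primes of `S/I` have the same height. -/
def IsUnmixed {R : Type*} [CommRing R] (I : Ideal R) : Prop :=
  ∀ P, ∀ hP : P ∈ associatedPrimes R (R ⧸ I), ∀ Q, ∀ hQ : Q ∈ associatedPrimes R (R ⧸ I),
    primeHeight' P hP.1 = primeHeight' Q hQ.1

end CM

noncomputable section Stmt13Aux
variable {K : Type*} [Field K]



private def V (v : Fin 5 → ℕ) : Fin 5 →₀ ℕ := Finsupp.equivFunOnFinite.symm v

@[simp] private lemma V_apply (v : Fin 5 → ℕ) (i : Fin 5) : V v i = v i := rfl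

private lemma range3 {α : Type*} (a b c : α) : Set.range ![a,b,c] = {a,b,c} := by
  ext x; simp [Matrix.range_cons, Matrix.range_empty]; tauto

private lemma range4 {α : Type*} (a b c d : α) : Set.range ![a,b,c,d] = {a,b,c,d} := by
  ext x; simp [Matrix.range_cons, Matrix.range_empty]; tauto

private lemma range5 {α : Type*} (a b c d e : α) : Set.range ![a,b,c,d,e] = {a,b,c,d,e} := by
  ext x; simp [Matrix.range_cons, Matrix.range_empty]; tauto

private lemma X_eqV (i : Fin 5) (v : Fin 5 → ℕ) (h : ∀ j, v j = if i = j then 1 else 0) :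
    (X i : MvPolynomial (Fin 5) K) = monomial (V v) 1 := by
  have : (V v : Fin 5 →₀ ℕ) = Finsupp.single i 1 := by
    ext j; simp [Finsupp.single_apply, h j]
  rw [this]; rfl

private lemma XX_eqV (i₁ i₂ : Fin 5) (n₁ n₂ : ℕ) (v : Fin 5 → ℕ)
    (h : ∀ j, v j = (if i₁ = j then n₁ else 0) + (if i₂ = j then n₂ else 0)) :
    (X i₁ ^ n₁ * X i₂ ^ n₂ : MvPolynomial (Fin 5) K) = monomial (V v) 1 := by
  have hv : (V v : Fin 5 →₀ ℕ) = Finsupp.single i₁ n₁ + Finsupp.single i₂ n₂ := by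
    ext j; simp [Finsupp.single_apply, h j]
  rw [X_pow_eq_monomial, X_pow_eq_monomial, monomial_mul, one_mul, hv]

private lemma span_monomial_pow {t : ℕ} (g : Fin t → (Fin 5 →₀ ℕ)) (s : ℕ) :
    (Ideal.span ((fun a => monomial a (1:K)) '' Set.range g)) ^ s =
    Ideal.span ((fun a => monomial a (1:K)) ''
      {b | ∃ a : Fin t → ℕ, (∑ j, a j) = s ∧ b = ∑ j, a j • g j}) := by
  induction s with
  | zero =>
    rw [pow_zero, Ideal.one_eq_top, eq_comm, Ideal.eq_top_iff_one]
    exact Ideal.subset_span ⟨0, ⟨fun _ => 0, by simp, by simp⟩, by simp [monomial_zero']⟩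
  | succ s ih =>
    rw [pow_succ, ih, Ideal.span_mul_span']
    congr 1
    ext p
    constructor
    · rintro ⟨x, ⟨b, ⟨a, ha, rfl⟩, rfl⟩, y, ⟨c, ⟨j, rfl⟩, rfl⟩, rfl⟩
      refine ⟨_, ⟨fun j' => a j' + if j' = j then 1 else 0, ?_, rfl⟩, ?_⟩
      · rw [Finset.sum_add_distrib, ha, Finset.sum_ite_eq' Finset.univ j (fun _ => 1)]
        simp
      · dsimp only
        rw [monomial_mul, one_mul]
        congr 1
        rw [show (∑ j', (a j' + if j' = j then 1 else 0) • g j')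
            = (∑ j', a j' • g j') + ∑ j', (if j' = j then 1 else 0) • g j' by
          rw [← Finset.sum_add_distrib]; exact Finset.sum_congr rfl fun j' _ => add_smul ..]
        congr 1
        rw [show (∑ j', (if j' = j then 1 else 0) • g j') = ∑ j', (if j' = j then g j' else 0) by
          exact Finset.sum_congr rfl fun j' _ => by split <;> simp]
        rw [Finset.sum_ite_eq' Finset.univ j g]
        simp
    · rintro ⟨b, ⟨a, ha, rfl⟩, rfl⟩
      have hne : ∃ j, a j ≠ 0 := by
        by_contra h
        push_neg at h
        simp [h] at ha
      obtain ⟨j, hj⟩ := hne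
      set a' : Fin t → ℕ := fun j' => a j' - if j' = j then 1 else 0 with ha'
      have hsplit : a = fun j' => a' j' + if j' = j then 1 else 0 := by
        funext j'
        by_cases h : j' = j <;> simp [ha', h] <;> omega
      refine ⟨monomial (∑ j', a' j' • g j') 1, ⟨_, ⟨a', ?_, rfl⟩, rfl⟩,
        monomial (g j) 1, ⟨g j, ⟨j, rfl⟩, rfl⟩, ?_⟩
      · have : (∑ j', a j') = (∑ j', a' j') + 1 := by
          rw [hsplit, Finset.sum_add_distrib, Finset.sum_ite_eq' Finset.univ j (fun _ => 1)]
          simp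
        omega
      · dsimp only
        rw [monomial_mul, one_mul]
        congr 1
        rw [hsplit]
        rw [show (∑ j', (a' j' + if j' = j then 1 else 0) • g j')
            = (∑ j', a' j' • g j') + ∑ j', (if j' = j then 1 else 0) • g j' by
          rw [← Finset.sum_add_distrib]; exact Finset.sum_congr rfl fun j' _ => add_smul ..]
        congr 1
        rw [show (∑ j', (if j' = j then 1 else 0) • g j') = ∑ j', (if j' = j then g j' else 0) by
          exact Finset.sum_congr rfl fun j' _ => by split <;> simp]
        rw [Finset.sum_ite_eq' Finset.univ j g]
        simp

private lemma mem_span_monomial_pow {t : ℕ} (g : Fin t → (Fin 5 →₀ ℕ)) (s : ℕ)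
    (f : MvPolynomial (Fin 5) K) :
    f ∈ (Ideal.span ((fun a => monomial a (1:K)) '' Set.range g)) ^ s ↔
    ∀ m ∈ f.support, ∃ a : Fin t → ℕ, (∑ j, a j) = s ∧ (∑ j, a j • g j) ≤ m := by
  rw [span_monomial_pow, mem_ideal_span_monomial_image]
  constructor
  · intro h m hm
    obtain ⟨b, ⟨a, ha, rfl⟩, hle⟩ := h m hm
    exact ⟨a, ha, hle⟩
  · intro h m hm
    obtain ⟨a, ha, hle⟩ := h m hm
    exact ⟨_, ⟨a, ha, rfl⟩, hle⟩

private lemma critQ0 (s : ℕ) (f : MvPolynomial (Fin 5) K) :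
    f ∈ (Ideal.span {X 0, X 1, X 3} : Ideal (MvPolynomial (Fin 5) K)) ^ s ↔
    ∀ m ∈ f.support, s ≤ m 0 + m 1 + m 3 := by
  have hset : ({X 0, X 1, X 3} : Set (MvPolynomial (Fin 5) K)) =
      (fun a => monomial a (1:K)) '' Set.range ![V ![1,0,0,0,0], V ![0,1,0,0,0], V ![0,0,0,1,0]] := by
    rw [range3, Set.image_insert_eq, Set.image_insert_eq, Set.image_singleton]
    rw [X_eqV 0 ![1,0,0,0,0] (by intro j; fin_cases j <;> simp),
        X_eqV 1 ![0,1,0,0,0] (by intro j; fin_cases j <;> simp),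
        X_eqV 3 ![0,0,0,1,0] (by intro j; fin_cases j <;> simp)]
  rw [hset, mem_span_monomial_pow]
  refine forall₂_congr fun m hm => ?_
  constructor
  · rintro ⟨a, ha, hle⟩
    rw [Finsupp.le_def] at hle
    have h0 := hle 0; have h1 := hle 1; have h3 := hle 3
    simp [Fin.sum_univ_three, Finsupp.add_apply, Finsupp.smul_apply] at h0 h1 h3
    rw [Fin.sum_univ_three] at ha
    omega
  · intro h
    refine ⟨![min s (m 0), min (s - min s (m 0)) (m 1),
      s - min s (m 0) - min (s - min s (m 0)) (m 1)], ?_, ?_⟩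
    · rw [Fin.sum_univ_three]; simp
    · rw [Finsupp.le_def]
      intro i
      fin_cases i <;>
        simp [Fin.sum_univ_three, Finsupp.add_apply, Finsupp.smul_apply] <;> omega

private lemma critQ1 (s : ℕ) (f : MvPolynomial (Fin 5) K) :
    f ∈ (Ideal.span {X 1, X 2, X 4} : Ideal (MvPolynomial (Fin 5) K)) ^ s ↔
    ∀ m ∈ f.support, s ≤ m 1 + m 2 + m 4 := by
  have hset : ({X 1, X 2, X 4} : Set (MvPolynomial (Fin 5) K)) =
      (fun a => monomial a (1:K)) '' Set.range ![V ![0,1,0,0,0], V ![0,0,1,0,0], V ![0,0,0,0,1]] := by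
    rw [range3, Set.image_insert_eq, Set.image_insert_eq, Set.image_singleton]
    rw [X_eqV 1 ![0,1,0,0,0] (by intro j; fin_cases j <;> simp),
        X_eqV 2 ![0,0,1,0,0] (by intro j; fin_cases j <;> simp),
        X_eqV 4 ![0,0,0,0,1] (by intro j; fin_cases j <;> simp)]
  rw [hset, mem_span_monomial_pow]
  refine forall₂_congr fun m hm => ?_
  constructor
  · rintro ⟨a, ha, hle⟩
    rw [Finsupp.le_def] at hle
    have h1 := hle 1; have h2 := hle 2; have h4 := hle 4
    simp [Fin.sum_univ_three, Finsupp.add_apply, Finsupp.smul_apply] at h1 h2 h4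
    rw [Fin.sum_univ_three] at ha
    omega
  · intro h
    refine ⟨![min s (m 1), min (s - min s (m 1)) (m 2),
      s - min s (m 1) - min (s - min s (m 1)) (m 2)], ?_, ?_⟩
    · rw [Fin.sum_univ_three]; simp
    · rw [Finsupp.le_def]
      intro i
      fin_cases i <;>
        simp [Fin.sum_univ_three, Finsupp.add_apply, Finsupp.smul_apply] <;> omega

private lemma critQ2 (s : ℕ) (f : MvPolynomial (Fin 5) K) :
    f ∈ (Ideal.span {X 1, X 3, X 4} : Ideal (MvPolynomial (Fin 5) K)) ^ s ↔
    ∀ m ∈ f.support, s ≤ m 1 + m 3 + m 4 := by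
  have hset : ({X 1, X 3, X 4} : Set (MvPolynomial (Fin 5) K)) =
      (fun a => monomial a (1:K)) '' Set.range ![V ![0,1,0,0,0], V ![0,0,0,1,0], V ![0,0,0,0,1]] := by
    rw [range3, Set.image_insert_eq, Set.image_insert_eq, Set.image_singleton]
    rw [X_eqV 1 ![0,1,0,0,0] (by intro j; fin_cases j <;> simp),
        X_eqV 3 ![0,0,0,1,0] (by intro j; fin_cases j <;> simp),
        X_eqV 4 ![0,0,0,0,1] (by intro j; fin_cases j <;> simp)]
  rw [hset, mem_span_monomial_pow]
  refine forall₂_congr fun m hm => ?_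
  constructor
  · rintro ⟨a, ha, hle⟩
    rw [Finsupp.le_def] at hle
    have h1 := hle 1; have h3 := hle 3; have h4 := hle 4
    simp [Fin.sum_univ_three, Finsupp.add_apply, Finsupp.smul_apply] at h1 h3 h4
    rw [Fin.sum_univ_three] at ha
    omega
  · intro h
    refine ⟨![min s (m 1), min (s - min s (m 1)) (m 3),
      s - min s (m 1) - min (s - min s (m 1)) (m 3)], ?_, ?_⟩
    · rw [Fin.sum_univ_three]; simp
    · rw [Finsupp.le_def]
      intro i
      fin_cases i <;>
        simp [Fin.sum_univ_three, Finsupp.add_apply, Finsupp.smul_apply] <;> omega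

private lemma critQ3 (s : ℕ) (f : MvPolynomial (Fin 5) K) :
    f ∈ (Ideal.span {X 0, X 2, X 4} : Ideal (MvPolynomial (Fin 5) K)) ^ s ↔
    ∀ m ∈ f.support, s ≤ m 0 + m 2 + m 4 := by
  have hset : ({X 0, X 2, X 4} : Set (MvPolynomial (Fin 5) K)) =
      (fun a => monomial a (1:K)) '' Set.range ![V ![1,0,0,0,0], V ![0,0,1,0,0], V ![0,0,0,0,1]] := by
    rw [range3, Set.image_insert_eq, Set.image_insert_eq, Set.image_singleton]
    rw [X_eqV 0 ![1,0,0,0,0] (by intro j; fin_cases j <;> simp),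
        X_eqV 2 ![0,0,1,0,0] (by intro j; fin_cases j <;> simp),
        X_eqV 4 ![0,0,0,0,1] (by intro j; fin_cases j <;> simp)]
  rw [hset, mem_span_monomial_pow]
  refine forall₂_congr fun m hm => ?_
  constructor
  · rintro ⟨a, ha, hle⟩
    rw [Finsupp.le_def] at hle
    have h0 := hle 0; have h2 := hle 2; have h4 := hle 4
    simp [Fin.sum_univ_three, Finsupp.add_apply, Finsupp.smul_apply] at h0 h2 h4
    rw [Fin.sum_univ_three] at ha
    omega
  · intro h
    refine ⟨![min s (m 0), min (s - min s (m 0)) (m 2),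
      s - min s (m 0) - min (s - min s (m 0)) (m 2)], ?_, ?_⟩
    · rw [Fin.sum_univ_three]; simp
    · rw [Finsupp.le_def]
      intro i
      fin_cases i <;>
        simp [Fin.sum_univ_three, Finsupp.add_apply, Finsupp.smul_apply] <;> omega

private lemma critQ4 (s : ℕ) (f : MvPolynomial (Fin 5) K) :
    f ∈ (Ideal.span {X 0, X 2 ^ 2, X 2 * X 3, X 3 ^ 2} : Ideal (MvPolynomial (Fin 5) K)) ^ s ↔
    ∀ m ∈ f.support, 2 * s ≤ 2 * m 0 + m 2 + m 3 := by
  have h1 : (X 0 : MvPolynomial (Fin 5) K) = monomial (V ![1,0,0,0,0]) 1 :=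
    X_eqV 0 ![1,0,0,0,0] (by intro j; fin_cases j <;> simp)
  have h2 : (X 2 ^ 2 : MvPolynomial (Fin 5) K) = monomial (V ![0,0,2,0,0]) 1 := by
    rw [show (X 2 ^ 2 : MvPolynomial (Fin 5) K) = X 2 ^ 2 * X 3 ^ 0 by ring]
    exact XX_eqV 2 3 2 0 ![0,0,2,0,0] (by intro j; fin_cases j <;> simp)
  have h3 : (X 2 * X 3 : MvPolynomial (Fin 5) K) = monomial (V ![0,0,1,1,0]) 1 := by
    rw [show (X 2 * X 3 : MvPolynomial (Fin 5) K) = X 2 ^ 1 * X 3 ^ 1 by ring]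
    exact XX_eqV 2 3 1 1 ![0,0,1,1,0] (by intro j; fin_cases j <;> simp)
  have h4 : (X 3 ^ 2 : MvPolynomial (Fin 5) K) = monomial (V ![0,0,0,2,0]) 1 := by
    rw [show (X 3 ^ 2 : MvPolynomial (Fin 5) K) = X 2 ^ 0 * X 3 ^ 2 by ring]
    exact XX_eqV 2 3 0 2 ![0,0,0,2,0] (by intro j; fin_cases j <;> simp)
  have hset : ({X 0, X 2 ^ 2, X 2 * X 3, X 3 ^ 2} : Set (MvPolynomial (Fin 5) K)) =
      (fun a => monomial a (1:K)) ''
        Set.range ![V ![1,0,0,0,0], V ![0,0,2,0,0], V ![0,0,1,1,0], V ![0,0,0,2,0]] := by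
    rw [range4, Set.image_insert_eq, Set.image_insert_eq, Set.image_insert_eq,
      Set.image_singleton, h1, h2, h3, h4]
  rw [hset, mem_span_monomial_pow]
  refine forall₂_congr fun m hm => ?_
  constructor
  · rintro ⟨a, ha, hle⟩
    rw [Finsupp.le_def] at hle
    have h0 := hle 0; have h2' := hle 2; have h3' := hle 3
    simp [Fin.sum_univ_four, Finsupp.add_apply, Finsupp.smul_apply] at h0 h2' h3'
    rw [Fin.sum_univ_four] at ha
    omega
  · intro h
    refine ⟨![min s (m 0), min (s - min s (m 0)) (m 2 / 2),
      s - min s (m 0) - min (s - min s (m 0)) (m 2 / 2)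
        - min (s - min s (m 0) - min (s - min s (m 0)) (m 2 / 2)) (m 3 / 2),
      min (s - min s (m 0) - min (s - min s (m 0)) (m 2 / 2)) (m 3 / 2)], ?_, ?_⟩
    · rw [Fin.sum_univ_four]; simp; omega
    · rw [Finsupp.le_def]
      intro i
      fin_cases i <;>
        simp [Fin.sum_univ_four, Finsupp.add_apply, Finsupp.smul_apply] <;> omega

private lemma critI (s : ℕ) (f : MvPolynomial (Fin 5) K) :
    f ∈ (Ideal.span {X 0 * X 1, X 1 * X 2 ^ 2, X 2 * X 3, X 3 ^ 2 * X 4, X 4 * X 0} :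
      Ideal (MvPolynomial (Fin 5) K)) ^ s ↔
    ∀ m ∈ f.support, ∃ a0 a1 a2 a3 a4 : ℕ, a0 + a1 + a2 + a3 + a4 = s ∧
      a0 + a4 ≤ m 0 ∧ a0 + a1 ≤ m 1 ∧ 2 * a1 + a2 ≤ m 2 ∧ a2 + 2 * a3 ≤ m 3 ∧ a3 + a4 ≤ m 4 := by
  have h1 : (X 0 * X 1 : MvPolynomial (Fin 5) K) = monomial (V ![1,1,0,0,0]) 1 := by
    rw [show (X 0 * X 1 : MvPolynomial (Fin 5) K) = X 0 ^ 1 * X 1 ^ 1 by ring]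
    exact XX_eqV 0 1 1 1 ![1,1,0,0,0] (by intro j; fin_cases j <;> simp)
  have h2 : (X 1 * X 2 ^ 2 : MvPolynomial (Fin 5) K) = monomial (V ![0,1,2,0,0]) 1 := by
    rw [show (X 1 * X 2 ^ 2 : MvPolynomial (Fin 5) K) = X 1 ^ 1 * X 2 ^ 2 by ring]
    exact XX_eqV 1 2 1 2 ![0,1,2,0,0] (by intro j; fin_cases j <;> simp)
  have h3 : (X 2 * X 3 : MvPolynomial (Fin 5) K) = monomial (V ![0,0,1,1,0]) 1 := by
    rw [show (X 2 * X 3 : MvPolynomial (Fin 5) K) = X 2 ^ 1 * X 3 ^ 1 by ring]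
    exact XX_eqV 2 3 1 1 ![0,0,1,1,0] (by intro j; fin_cases j <;> simp)
  have h4 : (X 3 ^ 2 * X 4 : MvPolynomial (Fin 5) K) = monomial (V ![0,0,0,2,1]) 1 := by
    rw [show (X 3 ^ 2 * X 4 : MvPolynomial (Fin 5) K) = X 3 ^ 2 * X 4 ^ 1 by ring]
    exact XX_eqV 3 4 2 1 ![0,0,0,2,1] (by intro j; fin_cases j <;> simp)
  have h5 : (X 4 * X 0 : MvPolynomial (Fin 5) K) = monomial (V ![1,0,0,0,1]) 1 := by
    rw [show (X 4 * X 0 : MvPolynomial (Fin 5) K) = X 4 ^ 1 * X 0 ^ 1 by ring]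
    exact XX_eqV 4 0 1 1 ![1,0,0,0,1] (by intro j; fin_cases j <;> simp)
  have hset : ({X 0 * X 1, X 1 * X 2 ^ 2, X 2 * X 3, X 3 ^ 2 * X 4, X 4 * X 0} :
      Set (MvPolynomial (Fin 5) K)) =
      (fun a => monomial a (1:K)) '' Set.range
        ![V ![1,1,0,0,0], V ![0,1,2,0,0], V ![0,0,1,1,0], V ![0,0,0,2,1], V ![1,0,0,0,1]] := by
    rw [range5, Set.image_insert_eq, Set.image_insert_eq, Set.image_insert_eq,
      Set.image_insert_eq, Set.image_singleton, h1, h2, h3, h4, h5]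
  rw [hset, mem_span_monomial_pow]
  refine forall₂_congr fun m hm => ?_
  constructor
  · rintro ⟨a, ha, hle⟩
    rw [Finsupp.le_def] at hle
    have g0 := hle 0; have g1 := hle 1; have g2 := hle 2; have g3 := hle 3; have g4 := hle 4
    simp [Fin.sum_univ_five, Finsupp.add_apply, Finsupp.smul_apply] at g0 g1 g2 g3 g4
    rw [Fin.sum_univ_five] at ha
    exact ⟨a 0, a 1, a 2, a 3, a 4, by omega, by omega, by omega, by omega, by omega, by omega⟩
  · rintro ⟨a0, a1, a2, a3, a4, hsum, c0, c1, c2, c3, c4⟩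
    refine ⟨![a0, a1, a2, a3, a4], ?_, ?_⟩
    · rw [Fin.sum_univ_five]; simp; omega
    · rw [Finsupp.le_def]
      intro i
      fin_cases i <;>
        simp [Fin.sum_univ_five, Finsupp.add_apply, Finsupp.smul_apply] <;> omega


/-- Core combinatorial lemma: the five symbolic-power inequalities imply ordinary-power
membership for the weighted 5-cycle. -/
private lemma core (s : ℕ) : ∀ c0 c1 c2 c3 c4 : ℕ,
    s ≤ c0 + c1 + c3 → s ≤ c1 + c2 + c4 → s ≤ c1 + c3 + c4 → s ≤ c0 + c2 + c4 →
    2 * s ≤ 2 * c0 + c2 + c3 →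
    ∃ a0 a1 a2 a3 a4 : ℕ, a0 + a1 + a2 + a3 + a4 = s ∧
      a0 + a4 ≤ c0 ∧ a0 + a1 ≤ c1 ∧ 2 * a1 + a2 ≤ c2 ∧ a2 + 2 * a3 ≤ c3 ∧ a3 + a4 ≤ c4 := by
  induction s with
  | zero => exact fun c0 c1 c2 c3 c4 _ _ _ _ _ => ⟨0,0,0,0,0, by omega⟩
  | succ s ih =>
    intro c0 c1 c2 c3 c4 hA hB hC hD hE
    have step :
        (1 ≤ c0 ∧ 1 ≤ c1 ∧ s ≤ (c0-1)+(c1-1)+c3 ∧ s ≤ (c1-1)+c2+c4 ∧ s ≤ (c1-1)+c3+c4 ∧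
          s ≤ (c0-1)+c2+c4 ∧ 2*s ≤ 2*(c0-1)+c2+c3) ∨
        (1 ≤ c1 ∧ 2 ≤ c2 ∧ s ≤ c0+(c1-1)+c3 ∧ s ≤ (c1-1)+(c2-2)+c4 ∧ s ≤ (c1-1)+c3+c4 ∧
          s ≤ c0+(c2-2)+c4 ∧ 2*s ≤ 2*c0+(c2-2)+c3) ∨
        (1 ≤ c2 ∧ 1 ≤ c3 ∧ s ≤ c0+c1+(c3-1) ∧ s ≤ c1+(c2-1)+c4 ∧ s ≤ c1+(c3-1)+c4 ∧
          s ≤ c0+(c2-1)+c4 ∧ 2*s ≤ 2*c0+(c2-1)+(c3-1)) ∨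
        (2 ≤ c3 ∧ 1 ≤ c4 ∧ s ≤ c0+c1+(c3-2) ∧ s ≤ c1+c2+(c4-1) ∧ s ≤ c1+(c3-2)+(c4-1) ∧
          s ≤ c0+c2+(c4-1) ∧ 2*s ≤ 2*c0+c2+(c3-2)) ∨
        (1 ≤ c4 ∧ 1 ≤ c0 ∧ s ≤ (c0-1)+c1+c3 ∧ s ≤ c1+c2+(c4-1) ∧ s ≤ c1+c3+(c4-1) ∧
          s ≤ (c0-1)+c2+(c4-1) ∧ 2*s ≤ 2*(c0-1)+c2+c3) := by
      omega
    rcases step with h | h | h | h | h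
    · obtain ⟨a0,a1,a2,a3,a4,hh⟩ := ih (c0-1) (c1-1) c2 c3 c4 h.2.2.1 h.2.2.2.1 h.2.2.2.2.1
        h.2.2.2.2.2.1 h.2.2.2.2.2.2
      exact ⟨a0+1, a1, a2, a3, a4, by omega⟩
    · obtain ⟨a0,a1,a2,a3,a4,hh⟩ := ih c0 (c1-1) (c2-2) c3 c4 h.2.2.1 h.2.2.2.1 h.2.2.2.2.1
        h.2.2.2.2.2.1 h.2.2.2.2.2.2
      exact ⟨a0, a1+1, a2, a3, a4, by omega⟩
    · obtain ⟨a0,a1,a2,a3,a4,hh⟩ := ih c0 c1 (c2-1) (c3-1) c4 h.2.2.1 h.2.2.2.1 h.2.2.2.2.1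
        h.2.2.2.2.2.1 h.2.2.2.2.2.2
      exact ⟨a0, a1, a2+1, a3, a4, by omega⟩
    · obtain ⟨a0,a1,a2,a3,a4,hh⟩ := ih c0 c1 c2 (c3-2) (c4-1) h.2.2.1 h.2.2.2.1 h.2.2.2.2.1
        h.2.2.2.2.2.1 h.2.2.2.2.2.2
      exact ⟨a0, a1, a2, a3+1, a4, by omega⟩
    · obtain ⟨a0,a1,a2,a3,a4,hh⟩ := ih (c0-1) c1 c2 c3 (c4-1) h.2.2.1 h.2.2.2.1 h.2.2.2.2.1
        h.2.2.2.2.2.1 h.2.2.2.2.2.2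
      exact ⟨a0, a1, a2, a3, a4+1, by omega⟩

private lemma sub_aeval_mem (C : Set (Fin 5)) [DecidablePred (· ∈ C)]
    (f : MvPolynomial (Fin 5) K) :
    f - aeval (fun i => if i ∈ C then 0 else X i) f ∈
      Ideal.span (X '' C : Set (MvPolynomial (Fin 5) K)) := by
  induction f using MvPolynomial.induction_on with
  | C a => simp
  | add p q hp hq =>
    have := Ideal.add_mem _ hp hq
    rw [sub_add_sub_comm] at this
    simpa [map_add] using this
  | mul_X p n hp =>
    rw [map_mul, aeval_X]
    by_cases hn : n ∈ C
    · rw [if_pos hn, mul_zero, sub_zero]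
      exact Ideal.mul_mem_left _ p (Ideal.subset_span ⟨n, hn, rfl⟩)
    · rw [if_neg hn, show p * X n - aeval (fun i => if i ∈ C then 0 else X i) p * X n
          = (p - aeval (fun i => if i ∈ C then 0 else X i) p) * X n by ring]
      exact Ideal.mul_mem_right _ _ hp

private lemma span_X_eq_ker (C : Set (Fin 5)) [DecidablePred (· ∈ C)] :
    (Ideal.span (X '' C : Set (MvPolynomial (Fin 5) K))) =
      RingHom.ker (aeval (R := K) (fun i => if i ∈ C then 0 else X i) :
        MvPolynomial (Fin 5) K →ₐ[K] MvPolynomial (Fin 5) K) := by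
  apply le_antisymm
  · rw [Ideal.span_le]
    rintro _ ⟨i, hi, rfl⟩
    simp [RingHom.mem_ker, if_pos hi]
  · intro f hf
    rw [RingHom.mem_ker] at hf
    have := sub_aeval_mem C f
    rwa [hf, sub_zero] at this

private lemma spanX_isPrime (C : Set (Fin 5)) [DecidablePred (· ∈ C)] :
    (Ideal.span (X '' C : Set (MvPolynomial (Fin 5) K))).IsPrime := by
  rw [span_X_eq_ker]
  exact RingHom.ker_isPrime _

private lemma mem_span_X_iff (C : Set (Fin 5)) [DecidablePred (· ∈ C)] (i : Fin 5) :
    (X i : MvPolynomial (Fin 5) K) ∈ Ideal.span (X '' C : Set (MvPolynomial (Fin 5) K)) ↔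
      i ∈ C := by
  constructor
  · intro h
    by_contra hi
    rw [span_X_eq_ker, RingHom.mem_ker, aeval_X, if_neg hi] at h
    exact X_ne_zero i h
  · exact fun h => Ideal.subset_span ⟨i, h, rfl⟩


private def w4 : Fin 5 → ℕ := ![2,0,1,1,0]

private lemma weight_w4 (m : Fin 5 →₀ ℕ) :
    Finsupp.weight w4 m = 2 * m 0 + m 2 + m 3 := by
  rw [Finsupp.weight_apply, Finsupp.sum_fintype _ _ (by intro i; simp)]
  rw [Fin.sum_univ_five]
  simp [w4, smul_eq_mul]
  omega

private lemma whc0_mul (f g : MvPolynomial (Fin 5) K) :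
    weightedHomogeneousComponent w4 0 (f * g) =
      weightedHomogeneousComponent w4 0 f * weightedHomogeneousComponent w4 0 g := by
  ext m
  rw [coeff_weightedHomogeneousComponent, coeff_mul, coeff_mul]
  split_ifs with h
  · refine Finset.sum_congr rfl fun p hp => ?_
    rw [Finset.HasAntidiagonal.mem_antidiagonal] at hp
    have hw : Finsupp.weight w4 p.1 = 0 ∧ Finsupp.weight w4 p.2 = 0 := by
      have h2 : Finsupp.weight w4 p.1 + Finsupp.weight w4 p.2 = 0 := by
        rw [← map_add, hp, h]
      omega
    rw [coeff_weightedHomogeneousComponent, coeff_weightedHomogeneousComponent,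
      if_pos hw.1, if_pos hw.2]
  · symm
    refine Finset.sum_eq_zero fun p hp => ?_
    rw [Finset.HasAntidiagonal.mem_antidiagonal] at hp
    rw [coeff_weightedHomogeneousComponent, coeff_weightedHomogeneousComponent]
    by_cases h1 : Finsupp.weight w4 p.1 = 0
    · have h2 : Finsupp.weight w4 p.2 ≠ 0 := fun h2 => h (by rw [← hp, map_add, h1, h2])
      rw [if_neg h2, mul_zero]
    · rw [if_neg h1, zero_mul]

private lemma whc1_mul (f g : MvPolynomial (Fin 5) K) :
    weightedHomogeneousComponent w4 1 (f * g) =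
      weightedHomogeneousComponent w4 0 f * weightedHomogeneousComponent w4 1 g +
      weightedHomogeneousComponent w4 1 f * weightedHomogeneousComponent w4 0 g := by
  ext m
  rw [coeff_weightedHomogeneousComponent, coeff_add, coeff_mul, coeff_mul, coeff_mul,
    ← Finset.sum_add_distrib]
  split_ifs with h
  · refine Finset.sum_congr rfl fun p hp => ?_
    rw [Finset.HasAntidiagonal.mem_antidiagonal] at hp
    have hsum : Finsupp.weight w4 p.1 + Finsupp.weight w4 p.2 = 1 := by
      rw [← map_add, hp, h]
    rw [coeff_weightedHomogeneousComponent, coeff_weightedHomogeneousComponent,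
      coeff_weightedHomogeneousComponent, coeff_weightedHomogeneousComponent]
    rcases Nat.eq_zero_or_pos (Finsupp.weight w4 p.1) with h1 | h1
    · rw [if_pos h1, if_pos (by omega : Finsupp.weight w4 p.2 = 1),
        if_neg (by omega), zero_mul, add_zero]
    · rw [if_neg (by omega), if_pos (by omega : Finsupp.weight w4 p.1 = 1),
        if_pos (by omega : Finsupp.weight w4 p.2 = 0), zero_mul, zero_add]
  · symm
    refine Finset.sum_eq_zero fun p hp => ?_
    rw [Finset.HasAntidiagonal.mem_antidiagonal] at hp
    have hsum : Finsupp.weight w4 p.1 + Finsupp.weight w4 p.2 ≠ 1 := by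
      rw [← map_add, hp]; exact h
    rw [coeff_weightedHomogeneousComponent, coeff_weightedHomogeneousComponent,
      coeff_weightedHomogeneousComponent, coeff_weightedHomogeneousComponent]
    by_cases h1 : Finsupp.weight w4 p.1 = 0
    · rw [if_pos h1, if_neg (by omega : ¬ Finsupp.weight w4 p.2 = 1), mul_zero,
        if_neg (by omega : ¬ Finsupp.weight w4 p.1 = 1), zero_mul, add_zero]
    · by_cases h2 : Finsupp.weight w4 p.2 = 0
      · rw [if_neg h1, if_neg (by omega : ¬ Finsupp.weight w4 p.1 = 1), zero_mul, zero_mul,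
          add_zero]
      · rw [if_neg h1, if_neg h2, zero_mul, mul_zero, add_zero]

private lemma whc_zero_iff (n : ℕ) (f : MvPolynomial (Fin 5) K) :
    weightedHomogeneousComponent w4 n f = 0 ↔
      ∀ m ∈ f.support, Finsupp.weight w4 m ≠ n := by
  constructor
  · intro h m hm hw
    have := congrArg (coeff m) h
    rw [coeff_weightedHomogeneousComponent, if_pos hw] at this
    exact mem_support_iff.mp hm (by simpa using this)
  · intro h
    ext m
    rw [coeff_weightedHomogeneousComponent]
    split_ifs with hw
    · by_cases hm : m ∈ f.support
      · exact absurd hw (h m hm)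
      · simpa using notMem_support_iff.mp hm
    · simp



private lemma mem_Q4_iff (f : MvPolynomial (Fin 5) K) :
    f ∈ (Ideal.span {X 0, X 2 ^ 2, X 2 * X 3, X 3 ^ 2} : Ideal (MvPolynomial (Fin 5) K)) ↔
      weightedHomogeneousComponent w4 0 f = 0 ∧ weightedHomogeneousComponent w4 1 f = 0 := by
  rw [← pow_one (Ideal.span {X 0, X 2 ^ 2, X 2 * X 3, X 3 ^ 2} :
    Ideal (MvPolynomial (Fin 5) K)), critQ4, whc_zero_iff, whc_zero_iff]
  constructor
  · intro h
    constructor <;> intro m hm <;> have := h m hm <;> rw [weight_w4] <;> omega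
  · rintro ⟨h0, h1⟩ m hm
    have g0 := h0 m hm
    have g1 := h1 m hm
    rw [weight_w4] at g0 g1
    omega

private lemma mem_P2_iff (f : MvPolynomial (Fin 5) K) :
    f ∈ Ideal.span (X '' {0,2,3} : Set (MvPolynomial (Fin 5) K)) ↔
      weightedHomogeneousComponent w4 0 f = 0 := by
  rw [mem_ideal_span_X_image, whc_zero_iff]
  refine forall₂_congr fun m hm => ?_
  rw [weight_w4]
  constructor
  · rintro ⟨i, hi, hne⟩
    simp only [Set.mem_insert_iff, Set.mem_singleton_iff] at hi
    rcases hi with rfl | rfl | rfl <;> omega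
  · intro h
    by_cases h0 : m 0 ≠ 0
    · exact ⟨0, by simp, h0⟩
    · by_cases h2 : m 2 ≠ 0
      · exact ⟨2, by simp, h2⟩
      · exact ⟨3, by simp, by omega⟩

private lemma Q4_le_P2 :
    (Ideal.span {X 0, X 2 ^ 2, X 2 * X 3, X 3 ^ 2} : Ideal (MvPolynomial (Fin 5) K)) ≤
      Ideal.span (X '' {0,2,3}) := by
  rw [Ideal.span_le]
  have hx0 : (X 0 : MvPolynomial (Fin 5) K) ∈ Ideal.span (X '' ({0,2,3} : Set (Fin 5))) :=
    Ideal.subset_span ⟨0, by simp, rfl⟩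
  have hx2 : (X 2 : MvPolynomial (Fin 5) K) ∈ Ideal.span (X '' ({0,2,3} : Set (Fin 5))) :=
    Ideal.subset_span ⟨2, by simp, rfl⟩
  have hx3 : (X 3 : MvPolynomial (Fin 5) K) ∈ Ideal.span (X '' ({0,2,3} : Set (Fin 5))) :=
    Ideal.subset_span ⟨3, by simp, rfl⟩
  rintro p hp
  simp only [Set.mem_insert_iff, Set.mem_singleton_iff] at hp
  rcases hp with rfl | rfl | rfl | rfl
  · exact hx0
  · rw [sq]; exact Ideal.mul_mem_left _ _ hx2
  · exact Ideal.mul_mem_left _ _ hx3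
  · rw [sq]; exact Ideal.mul_mem_left _ _ hx3

private lemma radQ4 :
    (Ideal.span {X 0, X 2 ^ 2, X 2 * X 3, X 3 ^ 2} :
      Ideal (MvPolynomial (Fin 5) K)).radical = Ideal.span (X '' {0,2,3}) := by
  apply le_antisymm
  · have := Ideal.radical_mono (Q4_le_P2 (K := K))
    rwa [(spanX_isPrime {0,2,3}).radical] at this
  · rw [Ideal.span_le]
    rintro _ ⟨i, hi, rfl⟩
    simp only [Set.mem_insert_iff, Set.mem_singleton_iff] at hi
    rcases hi with rfl | rfl | rfl
    · exact Ideal.le_radical (Ideal.subset_span (by simp))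
    · exact Ideal.mem_radical_of_pow_mem (m := 2)
        (Ideal.le_radical (Ideal.subset_span (by simp)))
    · exact Ideal.mem_radical_of_pow_mem (m := 2)
        (Ideal.le_radical (Ideal.subset_span (by simp)))

private lemma Q4_isPrimary :
    (Ideal.span {X 0, X 2 ^ 2, X 2 * X 3, X 3 ^ 2} :
      Ideal (MvPolynomial (Fin 5) K)).IsPrimary := by
  rw [Ideal.isPrimary_iff]
  constructor
  · intro h
    exact (spanX_isPrime {0,2,3}).ne_top (top_le_iff.mp (h ▸ Q4_le_P2 (K := K)))
  · intro x y hxy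
    rw [radQ4]
    by_cases hy : y ∈ Ideal.span (X '' ({0,2,3} : Set (Fin 5)) : Set (MvPolynomial (Fin 5) K))
    · exact Or.inr hy
    · left
      rw [mem_P2_iff] at hy
      rw [mem_Q4_iff] at hxy ⊢
      obtain ⟨h0, h1⟩ := hxy
      rw [whc0_mul] at h0
      rw [whc1_mul] at h1
      have hx0 : weightedHomogeneousComponent w4 0 x = 0 :=
        (mul_eq_zero.mp h0).resolve_right hy
      rw [hx0, zero_mul, zero_add] at h1
      exact ⟨hx0, (mul_eq_zero.mp h1).resolve_right hy⟩


private lemma critI1 (f : MvPolynomial (Fin 5) K) :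
    f ∈ (Ideal.span {X 0 * X 1, X 1 * X 2 ^ 2, X 2 * X 3, X 3 ^ 2 * X 4, X 4 * X 0} :
      Ideal (MvPolynomial (Fin 5) K)) ↔
    ∀ m ∈ f.support, ∃ a0 a1 a2 a3 a4 : ℕ, a0 + a1 + a2 + a3 + a4 = 1 ∧
      a0 + a4 ≤ m 0 ∧ a0 + a1 ≤ m 1 ∧ 2 * a1 + a2 ≤ m 2 ∧ a2 + 2 * a3 ≤ m 3 ∧ a3 + a4 ≤ m 4 := by
  conv_lhs => rw [← pow_one (Ideal.span {X 0 * X 1, X 1 * X 2 ^ 2, X 2 * X 3, X 3 ^ 2 * X 4,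
    X 4 * X 0} : Ideal (MvPolynomial (Fin 5) K))]
  exact critI 1 f

private lemma memQ0_of (f : MvPolynomial (Fin 5) K)
    (h : ∀ m ∈ f.support, 1 ≤ m 0 + m 1 + m 3) :
    f ∈ (Ideal.span {X 0, X 1, X 3} : Ideal (MvPolynomial (Fin 5) K)) := by
  have := (critQ0 1 f).mpr h; rwa [pow_one] at this

private lemma memQ1_of (f : MvPolynomial (Fin 5) K)
    (h : ∀ m ∈ f.support, 1 ≤ m 1 + m 2 + m 4) :
    f ∈ (Ideal.span {X 1, X 2, X 4} : Ideal (MvPolynomial (Fin 5) K)) := by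
  have := (critQ1 1 f).mpr h; rwa [pow_one] at this

private lemma memQ2_of (f : MvPolynomial (Fin 5) K)
    (h : ∀ m ∈ f.support, 1 ≤ m 1 + m 3 + m 4) :
    f ∈ (Ideal.span {X 1, X 3, X 4} : Ideal (MvPolynomial (Fin 5) K)) := by
  have := (critQ2 1 f).mpr h; rwa [pow_one] at this

private lemma memQ3_of (f : MvPolynomial (Fin 5) K)
    (h : ∀ m ∈ f.support, 1 ≤ m 0 + m 2 + m 4) :
    f ∈ (Ideal.span {X 0, X 2, X 4} : Ideal (MvPolynomial (Fin 5) K)) := by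
  have := (critQ3 1 f).mpr h; rwa [pow_one] at this

private lemma memQ4_of (f : MvPolynomial (Fin 5) K)
    (h : ∀ m ∈ f.support, 2 ≤ 2 * m 0 + m 2 + m 3) :
    f ∈ (Ideal.span {X 0, X 2 ^ 2, X 2 * X 3, X 3 ^ 2} : Ideal (MvPolynomial (Fin 5) K)) := by
  have := (critQ4 1 f).mpr (by simpa using h); rwa [pow_one] at this

private lemma conj5 (s : ℕ) :
    (⨅ k, (![Ideal.span {X 0, X 1, X 3}, Ideal.span {X 1, X 2, X 4},
      Ideal.span {X 1, X 3, X 4}, Ideal.span {X 0, X 2, X 4},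
      Ideal.span {X 0, X 2 ^ 2, X 2 * X 3, X 3 ^ 2}] :
        Fin 5 → Ideal (MvPolynomial (Fin 5) K)) k ^ s) =
    (Ideal.span {X 0 * X 1, X 1 * X 2 ^ 2, X 2 * X 3, X 3 ^ 2 * X 4, X 4 * X 0} :
      Ideal (MvPolynomial (Fin 5) K)) ^ s := by
  ext f
  rw [Submodule.mem_iInf]
  constructor
  · intro h
    rw [critI]
    intro m hm
    exact core s (m 0) (m 1) (m 2) (m 3) (m 4)
      ((critQ0 s f).mp (h 0) m hm) ((critQ1 s f).mp (h 1) m hm)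
      ((critQ2 s f).mp (h 2) m hm) ((critQ3 s f).mp (h 3) m hm)
      ((critQ4 s f).mp (h 4) m hm)
  · intro h k
    have hI' := (critI s f).mp h
    fin_cases k
    · exact (critQ0 s f).mpr fun m hm => by
        obtain ⟨a0,a1,a2,a3,a4,h1,h2,h3,h4,h5,h6⟩ := hI' m hm; omega
    · exact (critQ1 s f).mpr fun m hm => by
        obtain ⟨a0,a1,a2,a3,a4,h1,h2,h3,h4,h5,h6⟩ := hI' m hm; omega
    · exact (critQ2 s f).mpr fun m hm => by
        obtain ⟨a0,a1,a2,a3,a4,h1,h2,h3,h4,h5,h6⟩ := hI' m hm; omega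
    · exact (critQ3 s f).mpr fun m hm => by
        obtain ⟨a0,a1,a2,a3,a4,h1,h2,h3,h4,h5,h6⟩ := hI' m hm; omega
    · exact (critQ4 s f).mpr fun m hm => by
        obtain ⟨a0,a1,a2,a3,a4,h1,h2,h3,h4,h5,h6⟩ := hI' m hm; omega

private lemma conj2' : ∀ k : Fin 5,
    ((![Ideal.span {X 0, X 1, X 3}, Ideal.span {X 1, X 2, X 4},
      Ideal.span {X 1, X 3, X 4}, Ideal.span {X 0, X 2, X 4},
      Ideal.span {X 0, X 2 ^ 2, X 2 * X 3, X 3 ^ 2}] :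
        Fin 5 → Ideal (MvPolynomial (Fin 5) K)) k).IsPrimary := by
  classical
  intro k
  fin_cases k
  · have hp : (Ideal.span {X 0, X 1, X 3} : Ideal (MvPolynomial (Fin 5) K)).IsPrime := by
      rw [show ({X 0, X 1, X 3} : Set (MvPolynomial (Fin 5) K)) = X '' {0,1,3} by
        rw [Set.image_insert_eq, Set.image_insert_eq, Set.image_singleton]]
      exact spanX_isPrime _
    exact hp.isPrimary
  · have hp : (Ideal.span {X 1, X 2, X 4} : Ideal (MvPolynomial (Fin 5) K)).IsPrime := by
      rw [show ({X 1, X 2, X 4} : Set (MvPolynomial (Fin 5) K)) = X '' {1,2,4} by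
        rw [Set.image_insert_eq, Set.image_insert_eq, Set.image_singleton]]
      exact spanX_isPrime _
    exact hp.isPrimary
  · have hp : (Ideal.span {X 1, X 3, X 4} : Ideal (MvPolynomial (Fin 5) K)).IsPrime := by
      rw [show ({X 1, X 3, X 4} : Set (MvPolynomial (Fin 5) K)) = X '' {1,3,4} by
        rw [Set.image_insert_eq, Set.image_insert_eq, Set.image_singleton]]
      exact spanX_isPrime _
    exact hp.isPrimary
  · have hp : (Ideal.span {X 0, X 2, X 4} : Ideal (MvPolynomial (Fin 5) K)).IsPrime := by
      rw [show ({X 0, X 2, X 4} : Set (MvPolynomial (Fin 5) K)) = X '' {0,2,4} by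
        rw [Set.image_insert_eq, Set.image_insert_eq, Set.image_singleton]]
      exact spanX_isPrime _
    exact hp.isPrimary
  · exact Q4_isPrimary

private lemma conj3' : ∀ k l : Fin 5, k ≠ l →
    ((![Ideal.span {X 0, X 1, X 3}, Ideal.span {X 1, X 2, X 4},
      Ideal.span {X 1, X 3, X 4}, Ideal.span {X 0, X 2, X 4},
      Ideal.span {X 0, X 2 ^ 2, X 2 * X 3, X 3 ^ 2}] :
        Fin 5 → Ideal (MvPolynomial (Fin 5) K)) k).radical ≠
    ((![Ideal.span {X 0, X 1, X 3}, Ideal.span {X 1, X 2, X 4},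
      Ideal.span {X 1, X 3, X 4}, Ideal.span {X 0, X 2, X 4},
      Ideal.span {X 0, X 2 ^ 2, X 2 * X 3, X 3 ^ 2}] :
        Fin 5 → Ideal (MvPolynomial (Fin 5) K)) l).radical := by
  classical
  have r0 : (Ideal.span {X 0, X 1, X 3} : Ideal (MvPolynomial (Fin 5) K)).radical =
      Ideal.span (X '' ({0,1,3} : Set (Fin 5))) := by
    rw [show ({X 0, X 1, X 3} : Set (MvPolynomial (Fin 5) K)) = X '' {0,1,3} by
      rw [Set.image_insert_eq, Set.image_insert_eq, Set.image_singleton]]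
    exact (spanX_isPrime _).radical
  have r1 : (Ideal.span {X 1, X 2, X 4} : Ideal (MvPolynomial (Fin 5) K)).radical =
      Ideal.span (X '' ({1,2,4} : Set (Fin 5))) := by
    rw [show ({X 1, X 2, X 4} : Set (MvPolynomial (Fin 5) K)) = X '' {1,2,4} by
      rw [Set.image_insert_eq, Set.image_insert_eq, Set.image_singleton]]
    exact (spanX_isPrime _).radical
  have r2 : (Ideal.span {X 1, X 3, X 4} : Ideal (MvPolynomial (Fin 5) K)).radical =
      Ideal.span (X '' ({1,3,4} : Set (Fin 5))) := by
    rw [show ({X 1, X 3, X 4} : Set (MvPolynomial (Fin 5) K)) = X '' {1,3,4} by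
      rw [Set.image_insert_eq, Set.image_insert_eq, Set.image_singleton]]
    exact (spanX_isPrime _).radical
  have r3 : (Ideal.span {X 0, X 2, X 4} : Ideal (MvPolynomial (Fin 5) K)).radical =
      Ideal.span (X '' ({0,2,4} : Set (Fin 5))) := by
    rw [show ({X 0, X 2, X 4} : Set (MvPolynomial (Fin 5) K)) = X '' {0,2,4} by
      rw [Set.image_insert_eq, Set.image_insert_eq, Set.image_singleton]]
    exact (spanX_isPrime _).radical
  have r4 : (Ideal.span {X 0, X 2 ^ 2, X 2 * X 3, X 3 ^ 2} :
      Ideal (MvPolynomial (Fin 5) K)).radical =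
      Ideal.span (X '' ({0,2,3} : Set (Fin 5))) := radQ4
  intro k l hkl h
  fin_cases k <;> fin_cases l
  · exact absurd rfl hkl
  · have h' : (Ideal.span {X 0, X 1, X 3} : Ideal (MvPolynomial (Fin 5) K)).radical =
        (Ideal.span {X 1, X 2, X 4} : Ideal (MvPolynomial (Fin 5) K)).radical := h
    rw [r0, r1] at h'
    have hd : (X 0 : MvPolynomial (Fin 5) K) ∈
        Ideal.span (X '' ({0,1,3} : Set (Fin 5))) := (mem_span_X_iff _ 0).mpr (by simp)
    rw [h'] at hd
    exact absurd ((mem_span_X_iff _ 0).mp hd) (by simp)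
  · have h' : (Ideal.span {X 0, X 1, X 3} : Ideal (MvPolynomial (Fin 5) K)).radical =
        (Ideal.span {X 1, X 3, X 4} : Ideal (MvPolynomial (Fin 5) K)).radical := h
    rw [r0, r2] at h'
    have hd : (X 0 : MvPolynomial (Fin 5) K) ∈
        Ideal.span (X '' ({0,1,3} : Set (Fin 5))) := (mem_span_X_iff _ 0).mpr (by simp)
    rw [h'] at hd
    exact absurd ((mem_span_X_iff _ 0).mp hd) (by simp)
  · have h' : (Ideal.span {X 0, X 1, X 3} : Ideal (MvPolynomial (Fin 5) K)).radical =
        (Ideal.span {X 0, X 2, X 4} : Ideal (MvPolynomial (Fin 5) K)).radical := h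
    rw [r0, r3] at h'
    have hd : (X 1 : MvPolynomial (Fin 5) K) ∈
        Ideal.span (X '' ({0,1,3} : Set (Fin 5))) := (mem_span_X_iff _ 1).mpr (by simp)
    rw [h'] at hd
    exact absurd ((mem_span_X_iff _ 1).mp hd) (by simp)
  · have h' : (Ideal.span {X 0, X 1, X 3} : Ideal (MvPolynomial (Fin 5) K)).radical =
        (Ideal.span {X 0, X 2 ^ 2, X 2 * X 3, X 3 ^ 2} : Ideal (MvPolynomial (Fin 5) K)).radical := h
    rw [r0, r4] at h'
    have hd : (X 1 : MvPolynomial (Fin 5) K) ∈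
        Ideal.span (X '' ({0,1,3} : Set (Fin 5))) := (mem_span_X_iff _ 1).mpr (by simp)
    rw [h'] at hd
    exact absurd ((mem_span_X_iff _ 1).mp hd) (by simp)
  · have h' : (Ideal.span {X 1, X 2, X 4} : Ideal (MvPolynomial (Fin 5) K)).radical =
        (Ideal.span {X 0, X 1, X 3} : Ideal (MvPolynomial (Fin 5) K)).radical := h
    rw [r1, r0] at h'
    have hd : (X 2 : MvPolynomial (Fin 5) K) ∈
        Ideal.span (X '' ({1,2,4} : Set (Fin 5))) := (mem_span_X_iff _ 2).mpr (by simp)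
    rw [h'] at hd
    exact absurd ((mem_span_X_iff _ 2).mp hd) (by simp)
  · exact absurd rfl hkl
  · have h' : (Ideal.span {X 1, X 2, X 4} : Ideal (MvPolynomial (Fin 5) K)).radical =
        (Ideal.span {X 1, X 3, X 4} : Ideal (MvPolynomial (Fin 5) K)).radical := h
    rw [r1, r2] at h'
    have hd : (X 2 : MvPolynomial (Fin 5) K) ∈
        Ideal.span (X '' ({1,2,4} : Set (Fin 5))) := (mem_span_X_iff _ 2).mpr (by simp)
    rw [h'] at hd
    exact absurd ((mem_span_X_iff _ 2).mp hd) (by simp)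
  · have h' : (Ideal.span {X 1, X 2, X 4} : Ideal (MvPolynomial (Fin 5) K)).radical =
        (Ideal.span {X 0, X 2, X 4} : Ideal (MvPolynomial (Fin 5) K)).radical := h
    rw [r1, r3] at h'
    have hd : (X 1 : MvPolynomial (Fin 5) K) ∈
        Ideal.span (X '' ({1,2,4} : Set (Fin 5))) := (mem_span_X_iff _ 1).mpr (by simp)
    rw [h'] at hd
    exact absurd ((mem_span_X_iff _ 1).mp hd) (by simp)
  · have h' : (Ideal.span {X 1, X 2, X 4} : Ideal (MvPolynomial (Fin 5) K)).radical =
        (Ideal.span {X 0, X 2 ^ 2, X 2 * X 3, X 3 ^ 2} : Ideal (MvPolynomial (Fin 5) K)).radical := h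
    rw [r1, r4] at h'
    have hd : (X 1 : MvPolynomial (Fin 5) K) ∈
        Ideal.span (X '' ({1,2,4} : Set (Fin 5))) := (mem_span_X_iff _ 1).mpr (by simp)
    rw [h'] at hd
    exact absurd ((mem_span_X_iff _ 1).mp hd) (by simp)
  · have h' : (Ideal.span {X 1, X 3, X 4} : Ideal (MvPolynomial (Fin 5) K)).radical =
        (Ideal.span {X 0, X 1, X 3} : Ideal (MvPolynomial (Fin 5) K)).radical := h
    rw [r2, r0] at h'
    have hd : (X 4 : MvPolynomial (Fin 5) K) ∈
        Ideal.span (X '' ({1,3,4} : Set (Fin 5))) := (mem_span_X_iff _ 4).mpr (by simp)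
    rw [h'] at hd
    exact absurd ((mem_span_X_iff _ 4).mp hd) (by simp)
  · have h' : (Ideal.span {X 1, X 3, X 4} : Ideal (MvPolynomial (Fin 5) K)).radical =
        (Ideal.span {X 1, X 2, X 4} : Ideal (MvPolynomial (Fin 5) K)).radical := h
    rw [r2, r1] at h'
    have hd : (X 3 : MvPolynomial (Fin 5) K) ∈
        Ideal.span (X '' ({1,3,4} : Set (Fin 5))) := (mem_span_X_iff _ 3).mpr (by simp)
    rw [h'] at hd
    exact absurd ((mem_span_X_iff _ 3).mp hd) (by simp)
  · exact absurd rfl hkl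
  · have h' : (Ideal.span {X 1, X 3, X 4} : Ideal (MvPolynomial (Fin 5) K)).radical =
        (Ideal.span {X 0, X 2, X 4} : Ideal (MvPolynomial (Fin 5) K)).radical := h
    rw [r2, r3] at h'
    have hd : (X 1 : MvPolynomial (Fin 5) K) ∈
        Ideal.span (X '' ({1,3,4} : Set (Fin 5))) := (mem_span_X_iff _ 1).mpr (by simp)
    rw [h'] at hd
    exact absurd ((mem_span_X_iff _ 1).mp hd) (by simp)
  · have h' : (Ideal.span {X 1, X 3, X 4} : Ideal (MvPolynomial (Fin 5) K)).radical =
        (Ideal.span {X 0, X 2 ^ 2, X 2 * X 3, X 3 ^ 2} : Ideal (MvPolynomial (Fin 5) K)).radical := h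
    rw [r2, r4] at h'
    have hd : (X 1 : MvPolynomial (Fin 5) K) ∈
        Ideal.span (X '' ({1,3,4} : Set (Fin 5))) := (mem_span_X_iff _ 1).mpr (by simp)
    rw [h'] at hd
    exact absurd ((mem_span_X_iff _ 1).mp hd) (by simp)
  · have h' : (Ideal.span {X 0, X 2, X 4} : Ideal (MvPolynomial (Fin 5) K)).radical =
        (Ideal.span {X 0, X 1, X 3} : Ideal (MvPolynomial (Fin 5) K)).radical := h
    rw [r3, r0] at h'
    have hd : (X 2 : MvPolynomial (Fin 5) K) ∈
        Ideal.span (X '' ({0,2,4} : Set (Fin 5))) := (mem_span_X_iff _ 2).mpr (by simp)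
    rw [h'] at hd
    exact absurd ((mem_span_X_iff _ 2).mp hd) (by simp)
  · have h' : (Ideal.span {X 0, X 2, X 4} : Ideal (MvPolynomial (Fin 5) K)).radical =
        (Ideal.span {X 1, X 2, X 4} : Ideal (MvPolynomial (Fin 5) K)).radical := h
    rw [r3, r1] at h'
    have hd : (X 0 : MvPolynomial (Fin 5) K) ∈
        Ideal.span (X '' ({0,2,4} : Set (Fin 5))) := (mem_span_X_iff _ 0).mpr (by simp)
    rw [h'] at hd
    exact absurd ((mem_span_X_iff _ 0).mp hd) (by simp)
  · have h' : (Ideal.span {X 0, X 2, X 4} : Ideal (MvPolynomial (Fin 5) K)).radical =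
        (Ideal.span {X 1, X 3, X 4} : Ideal (MvPolynomial (Fin 5) K)).radical := h
    rw [r3, r2] at h'
    have hd : (X 0 : MvPolynomial (Fin 5) K) ∈
        Ideal.span (X '' ({0,2,4} : Set (Fin 5))) := (mem_span_X_iff _ 0).mpr (by simp)
    rw [h'] at hd
    exact absurd ((mem_span_X_iff _ 0).mp hd) (by simp)
  · exact absurd rfl hkl
  · have h' : (Ideal.span {X 0, X 2, X 4} : Ideal (MvPolynomial (Fin 5) K)).radical =
        (Ideal.span {X 0, X 2 ^ 2, X 2 * X 3, X 3 ^ 2} : Ideal (MvPolynomial (Fin 5) K)).radical := h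
    rw [r3, r4] at h'
    have hd : (X 4 : MvPolynomial (Fin 5) K) ∈
        Ideal.span (X '' ({0,2,4} : Set (Fin 5))) := (mem_span_X_iff _ 4).mpr (by simp)
    rw [h'] at hd
    exact absurd ((mem_span_X_iff _ 4).mp hd) (by simp)
  · have h' : (Ideal.span {X 0, X 2 ^ 2, X 2 * X 3, X 3 ^ 2} : Ideal (MvPolynomial (Fin 5) K)).radical =
        (Ideal.span {X 0, X 1, X 3} : Ideal (MvPolynomial (Fin 5) K)).radical := h
    rw [r4, r0] at h'
    have hd : (X 2 : MvPolynomial (Fin 5) K) ∈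
        Ideal.span (X '' ({0,2,3} : Set (Fin 5))) := (mem_span_X_iff _ 2).mpr (by simp)
    rw [h'] at hd
    exact absurd ((mem_span_X_iff _ 2).mp hd) (by simp)
  · have h' : (Ideal.span {X 0, X 2 ^ 2, X 2 * X 3, X 3 ^ 2} : Ideal (MvPolynomial (Fin 5) K)).radical =
        (Ideal.span {X 1, X 2, X 4} : Ideal (MvPolynomial (Fin 5) K)).radical := h
    rw [r4, r1] at h'
    have hd : (X 0 : MvPolynomial (Fin 5) K) ∈
        Ideal.span (X '' ({0,2,3} : Set (Fin 5))) := (mem_span_X_iff _ 0).mpr (by simp)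
    rw [h'] at hd
    exact absurd ((mem_span_X_iff _ 0).mp hd) (by simp)
  · have h' : (Ideal.span {X 0, X 2 ^ 2, X 2 * X 3, X 3 ^ 2} : Ideal (MvPolynomial (Fin 5) K)).radical =
        (Ideal.span {X 1, X 3, X 4} : Ideal (MvPolynomial (Fin 5) K)).radical := h
    rw [r4, r2] at h'
    have hd : (X 0 : MvPolynomial (Fin 5) K) ∈
        Ideal.span (X '' ({0,2,3} : Set (Fin 5))) := (mem_span_X_iff _ 0).mpr (by simp)
    rw [h'] at hd
    exact absurd ((mem_span_X_iff _ 0).mp hd) (by simp)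
  · have h' : (Ideal.span {X 0, X 2 ^ 2, X 2 * X 3, X 3 ^ 2} : Ideal (MvPolynomial (Fin 5) K)).radical =
        (Ideal.span {X 0, X 2, X 4} : Ideal (MvPolynomial (Fin 5) K)).radical := h
    rw [r4, r3] at h'
    have hd : (X 3 : MvPolynomial (Fin 5) K) ∈
        Ideal.span (X '' ({0,2,3} : Set (Fin 5))) := (mem_span_X_iff _ 3).mpr (by simp)
    rw [h'] at hd
    exact absurd ((mem_span_X_iff _ 3).mp hd) (by simp)
  · exact absurd rfl hkl

private lemma conj4' : ∀ k : Fin 5,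
    (⨅ l ∈ ({k}ᶜ : Set (Fin 5)), (![Ideal.span {X 0, X 1, X 3}, Ideal.span {X 1, X 2, X 4},
      Ideal.span {X 1, X 3, X 4}, Ideal.span {X 0, X 2, X 4},
      Ideal.span {X 0, X 2 ^ 2, X 2 * X 3, X 3 ^ 2}] :
        Fin 5 → Ideal (MvPolynomial (Fin 5) K)) l) ≠
    (Ideal.span {X 0 * X 1, X 1 * X 2 ^ 2, X 2 * X 3, X 3 ^ 2 * X 4, X 4 * X 0} :
      Ideal (MvPolynomial (Fin 5) K)) := by
  intro k h
  fin_cases k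
  · -- k = 0
    have hni : monomial (V ![0,0,2,0,1]) (1:K) ∉
        (Ideal.span {X 0 * X 1, X 1 * X 2 ^ 2, X 2 * X 3, X 3 ^ 2 * X 4, X 4 * X 0} :
          Ideal (MvPolynomial (Fin 5) K)) := by
      intro hmem
      obtain ⟨a0, a1, a2, a3, a4, hs, c0, c1, c2, c3, c4⟩ :=
        (critI1 _).mp hmem (V ![0,0,2,0,1]) (by simp [support_monomial])
      simp only [V_apply] at c0 c1 c2 c3 c4
      simp at c0 c1 c2 c3 c4
      omega
    apply hni
    rw [← h]
    rw [Submodule.mem_iInf]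
    intro l
    rw [Submodule.mem_iInf]
    intro hl
    fin_cases l
    · simp at hl
    · exact memQ1_of _ (fun m hm => by
        simp [support_monomial] at hm; subst hm; simp)
    · exact memQ2_of _ (fun m hm => by
        simp [support_monomial] at hm; subst hm; simp)
    · exact memQ3_of _ (fun m hm => by
        simp [support_monomial] at hm; subst hm; simp)
    · exact memQ4_of _ (fun m hm => by
        simp [support_monomial] at hm; subst hm; simp)
  · -- k = 1
    have hni : monomial (V ![1,0,0,1,0]) (1:K) ∉
        (Ideal.span {X 0 * X 1, X 1 * X 2 ^ 2, X 2 * X 3, X 3 ^ 2 * X 4, X 4 * X 0} :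
          Ideal (MvPolynomial (Fin 5) K)) := by
      intro hmem
      obtain ⟨a0, a1, a2, a3, a4, hs, c0, c1, c2, c3, c4⟩ :=
        (critI1 _).mp hmem (V ![1,0,0,1,0]) (by simp [support_monomial])
      simp only [V_apply] at c0 c1 c2 c3 c4
      simp at c0 c1 c2 c3 c4
      omega
    apply hni
    rw [← h]
    rw [Submodule.mem_iInf]
    intro l
    rw [Submodule.mem_iInf]
    intro hl
    fin_cases l
    · exact memQ0_of _ (fun m hm => by
        simp [support_monomial] at hm; subst hm; simp)
    · simp at hl
    · exact memQ2_of _ (fun m hm => by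
        simp [support_monomial] at hm; subst hm; simp)
    · exact memQ3_of _ (fun m hm => by
        simp [support_monomial] at hm; subst hm; simp)
    · exact memQ4_of _ (fun m hm => by
        simp [support_monomial] at hm; subst hm; simp)
  · -- k = 2
    have hni : monomial (V ![1,0,1,0,0]) (1:K) ∉
        (Ideal.span {X 0 * X 1, X 1 * X 2 ^ 2, X 2 * X 3, X 3 ^ 2 * X 4, X 4 * X 0} :
          Ideal (MvPolynomial (Fin 5) K)) := by
      intro hmem
      obtain ⟨a0, a1, a2, a3, a4, hs, c0, c1, c2, c3, c4⟩ :=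
        (critI1 _).mp hmem (V ![1,0,1,0,0]) (by simp [support_monomial])
      simp only [V_apply] at c0 c1 c2 c3 c4
      simp at c0 c1 c2 c3 c4
      omega
    apply hni
    rw [← h]
    rw [Submodule.mem_iInf]
    intro l
    rw [Submodule.mem_iInf]
    intro hl
    fin_cases l
    · exact memQ0_of _ (fun m hm => by
        simp [support_monomial] at hm; subst hm; simp)
    · exact memQ1_of _ (fun m hm => by
        simp [support_monomial] at hm; subst hm; simp)
    · simp at hl
    · exact memQ3_of _ (fun m hm => by
        simp [support_monomial] at hm; subst hm; simp)
    · exact memQ4_of _ (fun m hm => by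
        simp [support_monomial] at hm; subst hm; simp)
  · -- k = 3
    have hni : monomial (V ![0,1,0,2,0]) (1:K) ∉
        (Ideal.span {X 0 * X 1, X 1 * X 2 ^ 2, X 2 * X 3, X 3 ^ 2 * X 4, X 4 * X 0} :
          Ideal (MvPolynomial (Fin 5) K)) := by
      intro hmem
      obtain ⟨a0, a1, a2, a3, a4, hs, c0, c1, c2, c3, c4⟩ :=
        (critI1 _).mp hmem (V ![0,1,0,2,0]) (by simp [support_monomial])
      simp only [V_apply] at c0 c1 c2 c3 c4
      simp at c0 c1 c2 c3 c4
      omega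
    apply hni
    rw [← h]
    rw [Submodule.mem_iInf]
    intro l
    rw [Submodule.mem_iInf]
    intro hl
    fin_cases l
    · exact memQ0_of _ (fun m hm => by
        simp [support_monomial] at hm; subst hm; simp)
    · exact memQ1_of _ (fun m hm => by
        simp [support_monomial] at hm; subst hm; simp)
    · exact memQ2_of _ (fun m hm => by
        simp [support_monomial] at hm; subst hm; simp)
    · simp at hl
    · exact memQ4_of _ (fun m hm => by
        simp [support_monomial] at hm; subst hm; simp)
  · -- k = 4
    have hni : monomial (V ![0,1,0,0,1]) (1:K) ∉
        (Ideal.span {X 0 * X 1, X 1 * X 2 ^ 2, X 2 * X 3, X 3 ^ 2 * X 4, X 4 * X 0} :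
          Ideal (MvPolynomial (Fin 5) K)) := by
      intro hmem
      obtain ⟨a0, a1, a2, a3, a4, hs, c0, c1, c2, c3, c4⟩ :=
        (critI1 _).mp hmem (V ![0,1,0,0,1]) (by simp [support_monomial])
      simp only [V_apply] at c0 c1 c2 c3 c4
      simp at c0 c1 c2 c3 c4
      omega
    apply hni
    rw [← h]
    rw [Submodule.mem_iInf]
    intro l
    rw [Submodule.mem_iInf]
    intro hl
    fin_cases l
    · exact memQ0_of _ (fun m hm => by
        simp [support_monomial] at hm; subst hm; simp)
    · exact memQ1_of _ (fun m hm => by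
        simp [support_monomial] at hm; subst hm; simp)
    · exact memQ2_of _ (fun m hm => by
        simp [support_monomial] at hm; subst hm; simp)
    · exact memQ3_of _ (fun m hm => by
        simp [support_monomial] at hm; subst hm; simp)
    · simp at hl

end Stmt13Aux

theorem stmt13 {K : Type*} [Field K]
    (I : Ideal (MvPolynomial (Fin 5) K))
    (Q : Fin 5 → Ideal (MvPolynomial (Fin 5) K))
    (hI : I = Ideal.span {X 0 * X 1, X 1 * X 2 ^ 2, X 2 * X 3, X 3 ^ 2 * X 4, X 4 * X 0})
    (hQ : Q = ![Ideal.span {X 0, X 1, X 3}, Ideal.span {X 1, X 2, X 4},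
      Ideal.span {X 1, X 3, X 4}, Ideal.span {X 0, X 2, X 4},
      Ideal.span {X 0, X 2 ^ 2, X 2 * X 3, X 3 ^ 2}]) :
    I = (⨅ k, Q k) ∧
    (∀ k, (Q k).IsPrimary) ∧
    (∀ k l, k ≠ l → (Q k).radical ≠ (Q l).radical) ∧
    (∀ k, (⨅ l ∈ ({k}ᶜ : Set (Fin 5)), Q l) ≠ I) ∧
    (∀ s : ℕ, 1 ≤ s → (⨅ k, (Q k) ^ s) = I ^ s) := by
  subst hI hQ
  refine ⟨?_, conj2', conj3', conj4', fun s _ => conj5 s⟩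
  have h1 := conj5 (K := K) 1
  simp only [pow_one] at h1
  exact h1.symm
end

section
/- Let I be a support-2 monomial ideal in K[x1,x2,x3,x4] whose underlying graph is the 4-cycle C_4 on x1,x2,x3,x4. If I has at least two minimal generators supported on some edge {x_i, x_j} of C_4, then the monomial x_i^{ν_{i,j}} x_j^{ν_{j,i}} lies in I^{(1)} but not in I; hence I has an embedded associated prime. -/
set_option synthInstance.maxHeartbeats 1000000
set_option maxHeartbeats 1000000

open MvPolynomial

section Aux
variable {K : Type*} [Field K] {σ : Type*}

lemma pair_finsupp [DecidableEq σ] {c : σ →₀ ℕ} {i j : σ} (hij : i ≠ j)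
    (h : c.support = {i, j}) :
    c = Finsupp.single i (c i) + Finsupp.single j (c j) := by
  ext k
  simp only [Finsupp.add_apply, Finsupp.single_apply]
  by_cases hki : i = k
  · subst hki; simp [Ne.symm hij]
  · by_cases hkj : j = k
    · subst hkj; simp [hki]
    · have hk : k ∉ c.support := by
        rw [h, Finset.mem_insert, Finset.mem_singleton]
        push_neg
        exact ⟨fun h' => hki h'.symm, fun h' => hkj h'.symm⟩
      rw [Finsupp.notMem_support_iff] at hk
      simp [hk, hki, hkj]

lemma ker_aeval_eq_span (s : Set σ) [DecidablePred (· ∈ s)] :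
    RingHom.ker ((aeval (fun i => if i ∈ s then 0 else X i) :
        MvPolynomial σ K →ₐ[K] MvPolynomial σ K) : MvPolynomial σ K →+* MvPolynomial σ K)
      = Ideal.span ((fun i => (X i : MvPolynomial σ K)) '' s) := by
  classical
  apply le_antisymm
  · intro p hp
    rw [RingHom.mem_ker] at hp
    simp only [RingHom.coe_coe] at hp
    rw [mem_ideal_span_X_image]
    intro m hm
    by_contra hcon
    push_neg at hcon
    -- coefficient of m in aeval f p equals coeff m p
    have key : coeff m ((aeval (fun i => if i ∈ s then 0 else X i)) p) = coeff m p := by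
      conv_lhs => rw [p.as_sum, map_sum]
      rw [coeff_sum]
      rw [Finset.sum_eq_single m]
      · rw [aeval_monomial]
        have : (m.prod fun i k => (if i ∈ s then 0 else X i) ^ k) = monomial m (1 : K) := by
          rw [Finsupp.prod_congr (g2 := fun i k => (X i : MvPolynomial σ K) ^ k)]
          · rw [monomial_eq]; simp
          · intro i hi
            rw [if_neg]
            intro his
            exact (Finsupp.mem_support_iff.mp hi) (hcon i his)
        rw [this, algebraMap_eq, coeff_C_mul, coeff_monomial, if_pos rfl, mul_one]
      · intro m' hm' hne
        rw [aeval_monomial]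
        by_cases hts : ∃ i ∈ m'.support, i ∈ s
        · obtain ⟨i0, hi0, hi0s⟩ := hts
          have : (m'.prod fun i k => (if i ∈ s then 0 else X i) ^ k) = (0 : MvPolynomial σ K) := by
            apply Finset.prod_eq_zero hi0
            simp only [if_pos hi0s]
            exact zero_pow (Finsupp.mem_support_iff.mp hi0)
          rw [this, mul_zero, coeff_zero]
        · push_neg at hts
          have : (m'.prod fun i k => (if i ∈ s then 0 else X i) ^ k) = monomial m' (1 : K) := by
            rw [Finsupp.prod_congr (g2 := fun i k => (X i : MvPolynomial σ K) ^ k)]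
            · rw [monomial_eq]; simp
            · intro i hi; rw [if_neg (hts i hi)]
          rw [this, algebraMap_eq, coeff_C_mul, coeff_monomial, if_neg hne, mul_zero]
      · intro h
        rw [aeval_monomial]
        simp at h
        simp [h]
    rw [hp, coeff_zero] at key
    exact (mem_support_iff.mp hm) key.symm
  · rw [Ideal.span_le]
    rintro _ ⟨i, his, rfl⟩
    simp [RingHom.mem_ker, if_pos his]

lemma span_X_isPrime (s : Set σ) :
    (Ideal.span ((fun i => (X i : MvPolynomial σ K)) '' s)).IsPrime := by
  classical
  rw [← ker_aeval_eq_span s]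
  exact RingHom.ker_isPrime _

lemma X_not_mem_span_X {s : Set σ} {v : σ} (hv : v ∉ s) :
    (X v : MvPolynomial σ K) ∉ Ideal.span ((fun i => (X i : MvPolynomial σ K)) '' s) := by
  rw [mem_ideal_span_X_image]
  push_neg
  refine ⟨Finsupp.single v 1, ?_, ?_⟩
  · rw [support_X]; simp
  · intro i his
    classical
    rw [Finsupp.single_apply]
    by_cases h : v = i
    · subst h; exact absurd his hv
    · simp [h]

end Aux

theorem stmt14 {K : Type*} [Field K] (I : Ideal (MvPolynomial (Fin 4) K))
    (hmon : IsMonomialIdeal I) (h2 : IsSupportTwo I)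
    (hcyc : ∀ i j : Fin 4, (underGraph I).Adj i j ↔
      (i ≠ j ∧ (j = i + 1 ∨ i = j + 1)))
    (i j : Fin 4) (hij : (underGraph I).Adj i j)
    (a b : Fin 4 →₀ ℕ) (ha : a ∈ supportedOn I i j)
    (hb : b ∈ supportedOn I i j) (hab : a ≠ b) :
    (monomial (Finsupp.single i (nuExp I i j) + Finsupp.single j (nuExp I j i))
        (1 : K) : MvPolynomial (Fin 4) K) ∈ symbolicPower I 1 ∧
    (monomial (Finsupp.single i (nuExp I i j) + Finsupp.single j (nuExp I j i))
        (1 : K) : MvPolynomial (Fin 4) K) ∉ I ∧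
    ∃ P ∈ associatedPrimes (MvPolynomial (Fin 4) K) (MvPolynomial (Fin 4) K ⧸ I),
      P ∉ I.minimalPrimes := by

  classical
  have hedge := (hcyc i j).mp hij
  have hne : i ≠ j := hedge.1
  set m : Fin 4 →₀ ℕ := Finsupp.single i (nuExp I i j) + Finsupp.single j (nuExp I j i) with hm_def
  -- supportedOn symmetry
  have hcomm : ∀ k l : Fin 4, supportedOn I k l = supportedOn I l k := by
    intro k l
    unfold supportedOn
    ext c
    rw [Set.mem_setOf_eq, Set.mem_setOf_eq, Finset.pair_comm]
  -- nu lower bounds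
  have hnu_le : ∀ (k l : Fin 4), ∀ c ∈ supportedOn I k l, nuExp I k l ≤ c k := by
    intro k l c hc
    exact Nat.sInf_le ⟨c, hc, rfl⟩
  -- m is below every generator supported on {i,j}
  have hm_le : ∀ c ∈ supportedOn I i j, m ≤ c := by
    intro c hc
    rw [Finsupp.le_def]
    intro u
    rw [hm_def, Finsupp.add_apply, Finsupp.single_apply, Finsupp.single_apply]
    by_cases hui : i = u
    · subst hui
      rw [if_pos rfl, if_neg hne.symm, add_zero]
      exact hnu_le i j c hc
    · by_cases huj : j = u
      · subst huj
        rw [if_neg hui, if_pos rfl, zero_add]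
        exact hnu_le j i c ((hcomm i j) ▸ hc)
      · rw [if_neg hui, if_neg huj, add_zero]
        exact Nat.zero_le _
  -- Part 2 : the monomial is not in I
  have hnotI : (monomial m (1 : K) : MvPolynomial (Fin 4) K) ∉ I := by
    intro hmem
    have hma := ha.1.2 m hmem (hm_le a ha)
    have hmb := hb.1.2 m hmem (hm_le b hb)
    exact hab (hma ▸ hmb)
  -- minimal generators below any monomial of I
  have exists_min : ∀ b0 : Fin 4 →₀ ℕ, (monomial b0 (1:K) : MvPolynomial (Fin 4) K) ∈ I →
      ∃ c ∈ minGens I, c ≤ b0 := by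
    intro b0 hbI
    obtain ⟨c, ⟨hcI, hcb⟩, hmin⟩ := (wellFounded_lt (α := Fin 4 →₀ ℕ)).has_min
      {c | (monomial c (1:K) : MvPolynomial (Fin 4) K) ∈ I ∧ c ≤ b0} ⟨b0, hbI, le_rfl⟩
    refine ⟨c, ⟨hcI, ?_⟩, hcb⟩
    intro d hdI hdc
    by_contra hned
    exact hmin d ⟨hdI, hdc.trans hcb⟩ (lt_of_le_of_ne hdc hned)
  -- every minimal generator is supported on an edge of the 4-cycle
  have edge_of_minGen : ∀ c ∈ minGens I,
      ∃ k l : Fin 4, c.support = {k, l} ∧ k ≠ l ∧ (l = k + 1 ∨ k = l + 1) := by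
    intro c hc
    have hcard := h2 c hc
    rw [Finset.card_eq_two] at hcard
    obtain ⟨k, l, hkl, hsupp⟩ := hcard
    have hadj : (underGraph I).Adj k l := ⟨hkl, ⟨c, hc, hsupp⟩⟩
    exact ⟨k, l, hsupp, hkl, ((hcyc k l).mp hadj).2⟩
  -- I is contained in the span of the variables of any cover of the 4-cycle
  have hIsub : ∀ s : Set (Fin 4),
      (∀ k l : Fin 4, k ≠ l → (l = k + 1 ∨ k = l + 1) → k ∈ s ∨ l ∈ s) →
      I ≤ Ideal.span ((fun v => (X v : MvPolynomial (Fin 4) K)) '' s) := by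
    intro s hcover
    obtain ⟨A, hA⟩ := hmon
    rw [hA, Ideal.span_le]
    rintro _ ⟨a0, ha0, rfl⟩
    have haI : (monomial a0 (1:K) : MvPolynomial (Fin 4) K) ∈ I := by
      rw [hA]; exact Ideal.subset_span ⟨a0, ha0, rfl⟩
    obtain ⟨c, hc, hca⟩ := exists_min a0 haI
    obtain ⟨k, l, hsupp, hkl, hedge'⟩ := edge_of_minGen c hc
    have hvex : ∃ v, v ∈ s ∧ (v = k ∨ v = l) := by
      rcases hcover k l hkl hedge' with h | h
      · exact ⟨k, h, Or.inl rfl⟩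
      · exact ⟨l, h, Or.inr rfl⟩
    obtain ⟨v, hvs, hv⟩ := hvex
    have hvc : 1 ≤ c v := by
      have hvsupp : v ∈ c.support := by
        rw [hsupp, Finset.mem_insert, Finset.mem_singleton]; exact hv
      exact Nat.one_le_iff_ne_zero.mpr (Finsupp.mem_support_iff.mp hvsupp)
    have hva : 1 ≤ a0 v := le_trans hvc (Finsupp.le_def.mp hca v)
    have hdecomp : (monomial a0 (1:K) : MvPolynomial (Fin 4) K)
        = X v * monomial (a0 - Finsupp.single v 1) 1 := by
      have hfin : a0 = Finsupp.single v 1 + (a0 - Finsupp.single v 1) := by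
        ext u
        simp only [Finsupp.add_apply, Finsupp.tsub_apply, Finsupp.single_apply]
        by_cases h : v = u
        · subst h; rw [if_pos rfl]; omega
        · rw [if_neg h]; omega
      rw [X, monomial_mul, one_mul, ← hfin]
    show (monomial a0 (1:K) : MvPolynomial (Fin 4) K) ∈ Ideal.span _
    rw [hdecomp]
    exact Ideal.mul_mem_right _ _ (Ideal.subset_span ⟨v, hvs, rfl⟩)
  -- no minimal prime contains both X i and X j
  have hmin_not_both : ∀ P ∈ I.minimalPrimes,
      ¬ ((X i : MvPolynomial (Fin 4) K) ∈ P ∧ (X j : MvPolynomial (Fin 4) K) ∈ P) := by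
    rintro P hP ⟨hXi, hXj⟩
    have hPp : P.IsPrime := hP.1.1
    have hIP : I ≤ P := hP.1.2
    have hvC : ∀ k l : Fin 4, k ≠ l → (l = k + 1 ∨ k = l + 1) →
        (X k : MvPolynomial (Fin 4) K) ∈ P ∨ (X l : MvPolynomial (Fin 4) K) ∈ P := by
      intro k l hkl hedge'
      have hadj : (underGraph I).Adj k l := (hcyc k l).mpr ⟨hkl, hedge'⟩
      obtain ⟨c, hcmin, hcsupp⟩ := hadj.2
      have hcP : (monomial c (1:K) : MvPolynomial (Fin 4) K) ∈ P := hIP hcmin.1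
      rw [pair_finsupp hkl hcsupp] at hcP
      have hprod : (monomial (Finsupp.single k (c k) + Finsupp.single l (c l)) (1:K)
          : MvPolynomial (Fin 4) K) = X k ^ (c k) * X l ^ (c l) := by
        rw [X_pow_eq_monomial, X_pow_eq_monomial, monomial_mul, one_mul]
      rw [hprod] at hcP
      rcases hPp.mem_or_mem hcP with h | h
      · exact Or.inl (hPp.mem_of_pow_mem _ h)
      · exact Or.inr (hPp.mem_of_pow_mem _ h)
    -- key: a suitable parity class gives a contradiction
    have key : ∀ s : Set (Fin 4),
        (∀ k l : Fin 4, k ≠ l → (l = k + 1 ∨ k = l + 1) → k ∈ s ∨ l ∈ s) →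
        (i ∉ s ∨ j ∉ s) →
        (∀ v ∈ s, (X v : MvPolynomial (Fin 4) K) ∈ P) → False := by
      intro s hcover hnotin hXs
      have hQp := span_X_isPrime (K := K) s
      have hQI := hIsub s hcover
      have hQP : Ideal.span ((fun v => (X v : MvPolynomial (Fin 4) K)) '' s) ≤ P := by
        rw [Ideal.span_le]; rintro _ ⟨v, hv, rfl⟩; exact hXs v hv
      have hPQ := hP.2 ⟨hQp, hQI⟩ hQP
      rcases hnotin with h | h
      · exact X_not_mem_span_X h (hPQ hXi)
      · exact X_not_mem_span_X h (hPQ hXj)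
    have hmem02 : ∀ v : Fin 4, v ∈ ({0, 2} : Set (Fin 4)) ↔ (v = 0 ∨ v = 2) := by
      intro v; simp [Set.mem_insert_iff, Set.mem_singleton_iff]
    have hmem13 : ∀ v : Fin 4, v ∈ ({1, 3} : Set (Fin 4)) ↔ (v = 1 ∨ v = 3) := by
      intro v; simp [Set.mem_insert_iff, Set.mem_singleton_iff]
    have hpar0 : i ∉ ({0, 2} : Set (Fin 4)) ∨ j ∉ ({0, 2} : Set (Fin 4)) := by
      have hd : ∀ i' j' : Fin 4, i' ≠ j' → (j' = i' + 1 ∨ i' = j' + 1) →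
          ¬(i' = 0 ∨ i' = 2) ∨ ¬(j' = 0 ∨ j' = 2) := by decide
      rcases hd i j hne hedge.2 with h | h
      · left; rw [hmem02]; exact h
      · right; rw [hmem02]; exact h
    have hpar1 : i ∉ ({1, 3} : Set (Fin 4)) ∨ j ∉ ({1, 3} : Set (Fin 4)) := by
      have hd : ∀ i' j' : Fin 4, i' ≠ j' → (j' = i' + 1 ∨ i' = j' + 1) →
          ¬(i' = 1 ∨ i' = 3) ∨ ¬(j' = 1 ∨ j' = 3) := by decide
      rcases hd i j hne hedge.2 with h | h
      · left; rw [hmem13]; exact h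
      · right; rw [hmem13]; exact h
    have hcov0 : ∀ k l : Fin 4, k ≠ l → (l = k + 1 ∨ k = l + 1) →
        k ∈ ({0, 2} : Set (Fin 4)) ∨ l ∈ ({0, 2} : Set (Fin 4)) := by
      intro k l hkl he
      have hd : ∀ k' l' : Fin 4, k' ≠ l' → (l' = k' + 1 ∨ k' = l' + 1) →
          (k' = 0 ∨ k' = 2) ∨ (l' = 0 ∨ l' = 2) := by decide
      rcases hd k l hkl he with h | h
      · left; rw [hmem02]; exact h
      · right; rw [hmem02]; exact h
    have hcov1 : ∀ k l : Fin 4, k ≠ l → (l = k + 1 ∨ k = l + 1) →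
        k ∈ ({1, 3} : Set (Fin 4)) ∨ l ∈ ({1, 3} : Set (Fin 4)) := by
      intro k l hkl he
      have hd : ∀ k' l' : Fin 4, k' ≠ l' → (l' = k' + 1 ∨ k' = l' + 1) →
          (k' = 1 ∨ k' = 3) ∨ (l' = 1 ∨ l' = 3) := by decide
      rcases hd k l hkl he with h | h
      · left; rw [hmem13]; exact h
      · right; rw [hmem13]; exact h
    have e01 := hvC 0 1 (by decide) (by decide)
    have e12 := hvC 1 2 (by decide) (by decide)
    have e23 := hvC 2 3 (by decide) (by decide)
    have e30 := hvC 3 0 (by decide) (by decide)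
    by_cases hX0 : (X 0 : MvPolynomial (Fin 4) K) ∈ P
    · by_cases hX2 : (X 2 : MvPolynomial (Fin 4) K) ∈ P
      · refine key ({0, 2} : Set (Fin 4)) hcov0 hpar0 ?_
        intro v hv
        rw [hmem02] at hv
        rcases hv with rfl | rfl
        · exact hX0
        · exact hX2
      · have hX1 : (X 1 : MvPolynomial (Fin 4) K) ∈ P := e12.resolve_right hX2
        have hX3 : (X 3 : MvPolynomial (Fin 4) K) ∈ P := e23.resolve_left hX2
        refine key ({1, 3} : Set (Fin 4)) hcov1 hpar1 ?_
        intro v hv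
        rw [hmem13] at hv
        rcases hv with rfl | rfl
        · exact hX1
        · exact hX3
    · have hX3 : (X 3 : MvPolynomial (Fin 4) K) ∈ P := e30.resolve_right hX0
      have hX1 : (X 1 : MvPolynomial (Fin 4) K) ∈ P := e01.resolve_left hX0
      refine key ({1, 3} : Set (Fin 4)) hcov1 hpar1 ?_
      intro v hv
      rw [hmem13] at hv
      rcases hv with rfl | rfl
      · exact hX1
      · exact hX3
  -- local membership lemma
  have hloc : ∀ P ∈ I.minimalPrimes, ∀ hPp : P.IsPrime,
      algebraMap (MvPolynomial (Fin 4) K) (Localization.AtPrime P) (monomial m (1:K))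
        ∈ Ideal.map (algebraMap (MvPolynomial (Fin 4) K) (Localization.AtPrime P)) I := by
    intro P hP hPp
    have hnotboth := hmin_not_both P hP
    -- helper, symmetric in the two endpoints of the edge
    have main : ∀ (k l : Fin 4), k ≠ l → (supportedOn I k l).Nonempty →
        m = Finsupp.single k (nuExp I k l) + Finsupp.single l (nuExp I l k) →
        (X l : MvPolynomial (Fin 4) K) ∉ P →
        algebraMap (MvPolynomial (Fin 4) K) (Localization.AtPrime P) (monomial m (1:K))
          ∈ Ideal.map (algebraMap (MvPolynomial (Fin 4) K) (Localization.AtPrime P)) I := by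
      intro k l hkl hne' hmeq hXl
      obtain ⟨c1, hc1⟩ := hne'
      have hnumem : nuExp I k l ∈ (fun a => a k) '' supportedOn I k l :=
        Nat.sInf_mem ⟨c1 k, c1, hc1, rfl⟩
      obtain ⟨c0, hc0, hc0k'⟩ := hnumem
      have hc0k : c0 k = nuExp I k l := hc0k'
      have hnu'le : nuExp I l k ≤ c0 l := hnu_le l k c0 ((hcomm k l) ▸ hc0)
      have hc0eq : c0 = Finsupp.single k (c0 k) + Finsupp.single l (c0 l) :=
        pair_finsupp hkl hc0.2
      have hfin : c0 = m + Finsupp.single l (c0 l - nuExp I l k) := by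
        rw [hmeq]
        ext u
        simp only [Finsupp.add_apply, Finsupp.single_apply]
        by_cases hk : k = u
        · subst hk
          rw [if_pos rfl, if_neg (Ne.symm hkl), if_neg (Ne.symm hkl)]
          rw [← hc0k]
          omega
        · by_cases hl : l = u
          · subst hl
            rw [if_neg hk, if_pos rfl, if_pos rfl]
            omega
          · have hu0 : c0 u = 0 := by
              have hns : u ∉ c0.support := by
                rw [hc0.2, Finset.mem_insert, Finset.mem_singleton]
                push_neg
                exact ⟨fun h => hk h.symm, fun h => hl h.symm⟩
              rwa [Finsupp.notMem_support_iff] at hns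
            rw [if_neg hk, if_neg hl, if_neg hl]
            omega
      have heq : (monomial c0 (1:K) : MvPolynomial (Fin 4) K)
          = monomial m 1 * X l ^ (c0 l - nuExp I l k) := by
        rw [X_pow_eq_monomial, monomial_mul, mul_one, ← hfin]
      have hmap : algebraMap (MvPolynomial (Fin 4) K) (Localization.AtPrime P)
          (monomial c0 (1:K)) ∈ Ideal.map (algebraMap (MvPolynomial (Fin 4) K)
            (Localization.AtPrime P)) I := Ideal.mem_map_of_mem _ hc0.1.1
      rw [heq, map_mul, map_pow] at hmap
      have hu : IsUnit (algebraMap (MvPolynomial (Fin 4) K)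
          (Localization.AtPrime P) (X l)) :=
        (IsLocalization.AtPrime.isUnit_to_map_iff (Localization.AtPrime P) P _).mpr hXl
      obtain ⟨u, hu_eq⟩ := hu
      rw [← hu_eq, ← Units.val_pow_eq_pow_val] at hmap
      have h2' := Ideal.mul_mem_right (↑(u ^ (c0 l - nuExp I l k))⁻¹) _ hmap
      rwa [mul_assoc, Units.mul_inv, mul_one] at h2'
    rcases not_and_or.mp hnotboth with hXiP | hXjP
    · -- X i ∉ P : use edge (j, i)
      refine main j i hne.symm ((hcomm i j) ▸ hij.2) ?_ hXiP
      rw [hm_def, add_comm]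
    · refine main i j hne hij.2 rfl hXjP
  -- Part 1 : membership in the symbolic power
  have hsym : (monomial m (1:K) : MvPolynomial (Fin 4) K) ∈ symbolicPower I 1 := by
    rw [symbolicPower, Ideal.mem_iInf]
    rintro ⟨P, hP⟩
    have hPp : P.IsPrime := hP.1.1
    unfold localizedComponent
    rw [Ideal.mem_comap, pow_one]
    exact hloc P hP hPp
  refine ⟨hsym, hnotI, ?_⟩
  -- Part 3 : an embedded associated prime
  have hx : (Ideal.Quotient.mk I (monomial m (1:K))) ≠ 0 := by
    rw [Ne, Ideal.Quotient.eq_zero_iff_mem]; exact hnotI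
  obtain ⟨P, hPassoc, hann⟩ :=
    exists_le_isAssociatedPrime_of_isNoetherianRing (MvPolynomial (Fin 4) K) _ hx
  refine ⟨P, hPassoc, ?_⟩
  intro hPmin
  have hPp : P.IsPrime := hPmin.1.1
  haveI := hPp
  have hmem := hloc P hPmin hPp
  obtain ⟨⟨⟨y, hyI⟩, t⟩, hxt⟩ :=
    (IsLocalization.mem_map_algebraMap_iff P.primeCompl _).mp hmem
  rw [← map_mul] at hxt
  obtain ⟨c, hc⟩ := (IsLocalization.eq_iff_exists P.primeCompl _).mp hxt
  have hct : ((c * t : P.primeCompl) : MvPolynomial (Fin 4) K) ∉ P := (c * t).2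
  have hannmem : ((c * t : P.primeCompl) : MvPolynomial (Fin 4) K)
      ∈ (Submodule.span (MvPolynomial (Fin 4) K)
        {Ideal.Quotient.mk I (monomial m (1:K))}).annihilator := by
    rw [Submodule.mem_annihilator_span_singleton]
    have hsmul : ((c * t : P.primeCompl) : MvPolynomial (Fin 4) K)
        • (Ideal.Quotient.mk I (monomial m (1:K)))
        = Ideal.Quotient.mk I (((c * t : P.primeCompl) : MvPolynomial (Fin 4) K)
          * monomial m (1:K)) := rfl
    rw [hsmul, Ideal.Quotient.eq_zero_iff_mem]
    have : ((c * t : P.primeCompl) : MvPolynomial (Fin 4) K) * monomial m (1:K)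
        = ↑c * y := by
      rw [← hc]; push_cast; ring
    rw [this]
    exact I.mul_mem_left _ hyI
  exact hct (hann (by rw [Submodule.bot_colon']; exact hannmem))
end

section
/- Let I be a support-2 monomial ideal in K[x1,...,x5] whose underlying graph is the 5-cycle C_5, and suppose at least two minimal generators of I are supported on the edge {x1, x2}. Then the monomial x1^{ν_{1,2}} x2^{ν_{2,1}} x4^{ν_{4,3}} lies in I^{(1)} but not in I; in particular I has an embedded associated prime. -/
set_option synthInstance.maxHeartbeats 1000000
set_option maxHeartbeats 1000000

open MvPolynomial

section Auxx

open MvPolynomial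

variable {K : Type*} [Field K]

lemma aux_mono {I : Ideal (MvPolynomial (Fin 5) K)} {g c : Fin 5 →₀ ℕ}
    (hle : g ≤ c) (hg : (monomial g (1 : K) : MvPolynomial (Fin 5) K) ∈ I) :
    (monomial c (1 : K) : MvPolynomial (Fin 5) K) ∈ I := by
  have h : (monomial c (1 : K) : MvPolynomial (Fin 5) K)
      = monomial (c - g) (1 : K) * monomial g (1 : K) := by
    rw [monomial_mul, one_mul, tsub_add_cancel_of_le hle]
  rw [h]
  exact I.mul_mem_left _ hg

lemma aux_dickson {I : Ideal (MvPolynomial (Fin 5) K)} {c : Fin 5 →₀ ℕ}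
    (hc : (monomial c (1 : K) : MvPolynomial (Fin 5) K) ∈ I) :
    ∃ g ∈ minGens I, g ≤ c := by
  have hwf : WellFoundedLT (Fin 5 →₀ ℕ) := inferInstance
  obtain ⟨g, ⟨hgI, hgc⟩, hmin⟩ := hwf.wf.has_min
    {b | (monomial b (1 : K) : MvPolynomial (Fin 5) K) ∈ I ∧ b ≤ c} ⟨c, hc, le_rfl⟩
  refine ⟨g, ⟨hgI, fun b hbI hbg => ?_⟩, hgc⟩
  by_contra hne
  exact hmin b ⟨hbI, hbg.trans hgc⟩ (lt_of_le_of_ne hbg hne)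

lemma aux_edge {I : Ideal (MvPolynomial (Fin 5) K)} (h2 : IsSupportTwo I)
    (hcyc : ∀ i j : Fin 5, (underGraph I).Adj i j ↔ (i ≠ j ∧ (j = i + 1 ∨ i = j + 1)))
    {g : Fin 5 →₀ ℕ} (hg : g ∈ minGens I) :
    ∃ i : Fin 5, g ∈ supportedOn I i (i + 1) := by
  obtain ⟨i, j, hij, hsupp⟩ := Finset.card_eq_two.mp (h2 g hg)
  have hadj : (underGraph I).Adj i j := (⟨hij, g, hg, hsupp⟩ : i ≠ j ∧ (supportedOn I i j).Nonempty)
  rcases ((hcyc i j).mp hadj).2 with h | h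
  · exact ⟨i, hg, by rw [hsupp, h]⟩
  · exact ⟨j, hg, by rw [hsupp, Finset.pair_comm, h]⟩

lemma aux_comm (I : Ideal (MvPolynomial (Fin 5) K)) (i j : Fin 5) :
    supportedOn I i j = supportedOn I j i := by
  ext g
  simp only [supportedOn, Set.mem_setOf_eq, Finset.pair_comm]

lemma aux_attain {I : Ideal (MvPolynomial (Fin 5) K)} {i j : Fin 5}
    (hne : (supportedOn I i j).Nonempty) :
    ∃ g ∈ supportedOn I i j, g i = nuExp I i j := by
  have h : ((fun a => a i) '' supportedOn I i j).Nonempty := hne.image _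
  obtain ⟨g, hg, hgi⟩ := Nat.sInf_mem h
  exact ⟨g, hg, hgi⟩

lemma aux_sInf_le {I : Ideal (MvPolynomial (Fin 5) K)} {i j : Fin 5}
    {f : Fin 5 →₀ ℕ} (hf : f ∈ supportedOn I i j) : nuExp I i j ≤ f i :=
  Nat.sInf_le ⟨f, hf, rfl⟩

end Auxx
section Auxx2

open MvPolynomial

variable {K : Type*} [Field K]

open Classical in
/-- Substitution killing the variables in `C`. -/
noncomputable def killVars (s : Set (Fin 5)) :
    MvPolynomial (Fin 5) K →ₐ[K] MvPolynomial (Fin 5) K :=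
  aeval (fun i => if i ∈ s then 0 else X i)

open Classical in
lemma killVars_X (s : Set (Fin 5)) (i : Fin 5) :
    killVars (K := K) s (X i) = if i ∈ s then 0 else X i :=
  aeval_X _ _

lemma killVars_sub_mem (s : Set (Fin 5)) (p : MvPolynomial (Fin 5) K) :
    p - killVars s p ∈ Ideal.span ((X : Fin 5 → MvPolynomial (Fin 5) K) '' s) := by
  induction p using MvPolynomial.induction_on with
  | C a =>
    have : killVars (K := K) s (C a) = C a := by
      simp [killVars, algebraMap_eq]
    rw [this, sub_self]
    exact Ideal.zero_mem _
  | add p q hp hq =>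
    have h : p + q - killVars s (p + q) = (p - killVars s p) + (q - killVars s q) := by
      rw [map_add]; ring
    rw [h]
    exact Ideal.add_mem _ hp hq
  | mul_X p i hp =>
    rw [map_mul, killVars_X]
    by_cases hi : i ∈ s
    · rw [if_pos hi, mul_zero, sub_zero]
      exact Ideal.mul_mem_left _ _ (Ideal.subset_span ⟨i, hi, rfl⟩)
    · rw [if_neg hi]
      have h : p * X i - killVars s p * X i = (p - killVars s p) * X i := by ring
      rw [h]
      exact Ideal.mul_mem_right _ _ hp

lemma aux_prime (s : Set (Fin 5)) :
    (Ideal.span ((X : Fin 5 → MvPolynomial (Fin 5) K) '' s)).IsPrime := by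
  have hker : Ideal.span ((X : Fin 5 → MvPolynomial (Fin 5) K) '' s)
      = RingHom.ker (killVars (K := K) s) := by
    apply le_antisymm
    · rw [Ideal.span_le]
      rintro _ ⟨i, hi, rfl⟩
      simp [SetLike.mem_coe, RingHom.mem_ker, killVars_X, hi]
    · intro p hp
      have h0 : killVars (K := K) s p = 0 := hp
      have h := killVars_sub_mem s p
      rwa [h0, sub_zero] at h
  rw [hker]
  exact RingHom.ker_isPrime _

lemma aux_X_not_mem {s : Set (Fin 5)} {i : Fin 5} (hi : i ∉ s) :
    (X i : MvPolynomial (Fin 5) K) ∉ Ideal.span ((X : Fin 5 → MvPolynomial (Fin 5) K) '' s) := by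
  intro h
  obtain ⟨j, hj, hji⟩ := mem_ideal_span_X_image.mp h (Finsupp.single i 1)
    (by rw [support_X]; exact Finset.mem_singleton_self _)
  have hij : j = i := by
    by_contra hne
    exact hji (Finsupp.single_eq_of_ne' (Ne.symm hne))
  exact hi (hij ▸ hj)

end Auxx2
section Auxx3

open MvPolynomial

variable {K : Type*} [Field K]

lemma aux_cover {I : Ideal (MvPolynomial (Fin 5) K)} (hmon : IsMonomialIdeal I)
    (h2 : IsSupportTwo I)
    (hcyc : ∀ i j : Fin 5, (underGraph I).Adj i j ↔ (i ≠ j ∧ (j = i + 1 ∨ i = j + 1)))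
    {s : Set (Fin 5)} (hs : ∀ i : Fin 5, i ∈ s ∨ i + 1 ∈ s) :
    I ≤ Ideal.span ((X : Fin 5 → MvPolynomial (Fin 5) K) '' s) := by
  obtain ⟨A, hA⟩ := hmon
  conv_lhs => rw [hA]
  rw [Ideal.span_le]
  rintro _ ⟨c, hcA, rfl⟩
  have hcI : (monomial c (1 : K) : MvPolynomial (Fin 5) K) ∈ I := by
    rw [hA]; exact Ideal.subset_span ⟨c, hcA, rfl⟩
  obtain ⟨g, hg, hgc⟩ := aux_dickson hcI
  obtain ⟨i, hgi⟩ := aux_edge h2 hcyc hg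
  have key : ∀ k : Fin 5, k ∈ s → k ∈ g.support →
      (monomial c (1 : K) : MvPolynomial (Fin 5) K) ∈
        ↑(Ideal.span ((X : Fin 5 → MvPolynomial (Fin 5) K) '' s)) := by
    intro k hks hkg
    refine SetLike.mem_coe.mpr (mem_ideal_span_X_image.mpr ?_)
    intro m hm
    have hmc : m = c := by
      classical
      rw [support_monomial, if_neg (one_ne_zero : (1 : K) ≠ 0)] at hm
      exact Finset.mem_singleton.mp hm
    refine ⟨k, hks, ?_⟩
    rw [hmc]
    intro h0
    exact Finsupp.mem_support_iff.mp hkg (Nat.le_zero.mp (h0 ▸ hgc k))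
  rcases hs i with hi | hi
  · exact key i hi (by rw [hgi.2]; exact Finset.mem_insert_self _ _)
  · exact key (i + 1) hi
      (by rw [hgi.2]; exact Finset.mem_insert_of_mem (Finset.mem_singleton_self _))

lemma aux_nodouble {I : Ideal (MvPolynomial (Fin 5) K)}
    {a b : Fin 5 →₀ ℕ} (ha : a ∈ supportedOn I 0 1) (hb : b ∈ supportedOn I 0 1)
    (hab : a ≠ b) {e : Fin 5 →₀ ℕ} (he : e ∈ supportedOn I 0 1)
    (h0 : e 0 ≤ nuExp I 0 1) (h1 : e 1 ≤ nuExp I 1 0) : False := by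
  obtain ⟨f, hf, hfe⟩ : ∃ f ∈ supportedOn I 0 1, f ≠ e := by
    rcases eq_or_ne e a with rfl | hea
    · exact ⟨b, hb, fun h => hab h.symm⟩
    · exact ⟨a, ha, Ne.symm hea⟩
  have hf10 : f ∈ supportedOn I 1 0 := by rw [aux_comm I 1 0]; exact hf
  have hle : e ≤ f := by
    rw [Finsupp.le_def]
    intro k
    have hek : k ∉ ({0, 1} : Finset (Fin 5)) → e k = 0 := by
      intro hk
      exact Finsupp.notMem_support_iff.mp (by rw [he.2]; exact hk)
    fin_cases k
    · exact h0.trans (aux_sInf_le hf)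
    · exact h1.trans (aux_sInf_le hf10)
    · rw [hek (by decide)]; exact Nat.zero_le _
    · rw [hek (by decide)]; exact Nat.zero_le _
    · rw [hek (by decide)]; exact Nat.zero_le _
  exact hfe (hf.1.2 e he.1.1 hle).symm

end Auxx3
section Auxx4

lemma mem_localizedComponent {R : Type*} [CommRing R] {J P : Ideal R} (hP : P.IsPrime)
    {x u : R} (hu : u ∉ P) (hux : u * x ∈ J) : x ∈ localizedComponent J P hP := by
  letI := hP
  show x ∈ (J.map (algebraMap R (Localization.AtPrime P))).comap
    (algebraMap R (Localization.AtPrime P))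
  refine Ideal.mem_comap.mpr ?_
  have h1 : algebraMap R (Localization.AtPrime P) (u * x)
      ∈ J.map (algebraMap R (Localization.AtPrime P)) := Ideal.mem_map_of_mem _ hux
  have hu' : IsUnit (algebraMap R (Localization.AtPrime P) u) :=
    IsLocalization.map_units (Localization.AtPrime P) (⟨u, hu⟩ : P.primeCompl)
  obtain ⟨v, hv⟩ := hu'.exists_left_inv
  have h2 : algebraMap R (Localization.AtPrime P) x
      = v * algebraMap R (Localization.AtPrime P) (u * x) := by
    rw [map_mul, ← mul_assoc, hv, one_mul]
  rw [h2]
  exact Ideal.mul_mem_left _ _ h1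

lemma exists_of_mem_localizedComponent {R : Type*} [CommRing R] [IsDomain R] {J P : Ideal R}
    (hP : P.IsPrime) {x : R} (hx : x ∈ localizedComponent J P hP) :
    ∃ u, u ∉ P ∧ u * x ∈ J := by
  letI := hP
  have hx' : algebraMap R (Localization.AtPrime P) x
      ∈ J.map (algebraMap R (Localization.AtPrime P)) := hx
  obtain ⟨⟨i, u⟩, heq⟩ :=
    (IsLocalization.mem_map_algebraMap_iff P.primeCompl (Localization.AtPrime P)).mp hx'
  have hinj : Function.Injective (algebraMap R (Localization.AtPrime P)) :=
    IsLocalization.injective _ P.primeCompl_le_nonZeroDivisors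
  have hxu : x * (u : R) = i := hinj (by rw [map_mul]; exact heq)
  exact ⟨u, u.2, by rw [mul_comm, hxu]; exact i.2⟩

end Auxx4
section Auxx5

lemma aux_assprime {R : Type*} [CommRing R] [IsNoetherianRing R] {I : Ideal R} {m : R}
    (hm : m ∉ I) :
    ∃ P ∈ associatedPrimes R (R ⧸ I), ∀ u : R, u * m ∈ I → u ∈ P := by
  set J := I.colon (Ideal.span {m}) with hJdef
  have hJ : J ≠ ⊤ := by
    intro h
    refine hm ?_
    have h1 : (1 : R) ∈ J := h ▸ Submodule.mem_top
    simpa using Ideal.mem_colon_span_singleton.mp h1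
  haveI := Ideal.Quotient.nontrivial_iff.mpr hJ
  obtain ⟨P, hP⟩ := associatedPrimes.nonempty R (R ⧸ J)
  obtain ⟨hPp, y, hy⟩ := hP
  obtain ⟨r, rfl⟩ := Ideal.Quotient.mk_surjective y
  have hsmulJ : ∀ t s : R, t • Ideal.Quotient.mk J s = Ideal.Quotient.mk J (t * s) :=
    fun _ _ => rfl
  have hsmulI : ∀ t s : R, t • Ideal.Quotient.mk I s = Ideal.Quotient.mk I (t * s) :=
    fun _ _ => rfl
  have hmemJ : ∀ t : R, t ∈ J ↔ t * m ∈ I := fun t => Ideal.mem_colon_span_singleton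
  refine ⟨P, ⟨hPp, Ideal.Quotient.mk I (r * m), ?_⟩, ?_⟩
  · rw [hy]
    congr 1
    ext t
    rw [Submodule.mem_colon_singleton, Submodule.mem_colon_singleton, Submodule.mem_bot,
      Submodule.mem_bot, hsmulJ, hsmulI, Ideal.Quotient.eq_zero_iff_mem, Ideal.Quotient.eq_zero_iff_mem,
      hmemJ]
    rw [mul_assoc]
  · intro u hu
    rw [hy]
    apply Ideal.le_radical
    rw [Submodule.mem_colon_singleton, Submodule.mem_bot, hsmulJ,
      Ideal.Quotient.eq_zero_iff_mem, hmemJ]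
    rw [show u * r * m = (u * m) * r by ring]
    exact I.mul_mem_right _ hu

end Auxx5
section Auxx6

open MvPolynomial

/-- The exponent vector of the witness monomial. -/
noncomputable def mvecOf {K : Type*} [Field K] (I : Ideal (MvPolynomial (Fin 5) K)) :
    Fin 5 →₀ ℕ :=
  Finsupp.single 0 (nuExp I 0 1) + Finsupp.single 1 (nuExp I 1 0) +
    Finsupp.single 3 (nuExp I 3 2)

variable {K : Type*} [Field K] {I : Ideal (MvPolynomial (Fin 5) K)}

lemma aux_zero {e : Fin 5 →₀ ℕ} {i j : Fin 5} (hsupp : e.support = {i, j})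
    {k : Fin 5} (hki : k ≠ i) (hkj : k ≠ j) : e k = 0 := by
  apply Finsupp.notMem_support_iff.mp
  rw [hsupp]
  simp [hki, hkj]

lemma aux_not_mem (hmon : IsMonomialIdeal I) (h2 : IsSupportTwo I)
    (hcyc : ∀ i j : Fin 5, (underGraph I).Adj i j ↔ (i ≠ j ∧ (j = i + 1 ∨ i = j + 1)))
    {a b : Fin 5 →₀ ℕ} (ha : a ∈ supportedOn I 0 1) (hb : b ∈ supportedOn I 0 1)
    (hab : a ≠ b) :
    (monomial (mvecOf I) (1 : K) : MvPolynomial (Fin 5) K) ∉ I := by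
  intro hmem
  obtain ⟨A, hA⟩ := hmon
  have hmem' : (monomial (mvecOf I) (1 : K) : MvPolynomial (Fin 5) K)
      ∈ Ideal.span ((fun a => (monomial a (1 : K) : MvPolynomial (Fin 5) K)) '' A) := by
    rw [← hA]; exact hmem
  have hsup : mvecOf I ∈ (monomial (mvecOf I) (1 : K) : MvPolynomial (Fin 5) K).support := by
    classical
    rw [support_monomial, if_neg (one_ne_zero : (1 : K) ≠ 0)]
    exact Finset.mem_singleton_self _
  obtain ⟨s, hsA, hsle⟩ := mem_ideal_span_monomial_image.mp hmem' _ hsup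
  have hsI : (monomial s (1 : K) : MvPolynomial (Fin 5) K) ∈ I := by
    rw [hA]; exact Ideal.subset_span ⟨s, hsA, rfl⟩
  obtain ⟨g, hg, hgs⟩ := aux_dickson hsI
  have hgm : ∀ k, g k ≤ mvecOf I k := Finsupp.le_def.mp (hgs.trans hsle)
  obtain ⟨i, hgi⟩ := aux_edge h2 hcyc hg
  have hg2 : g 2 = 0 := by
    have h := hgm 2
    simp only [mvecOf, Finsupp.coe_add, Pi.add_apply, Finsupp.single_apply] at h
    simpa using h
  have hg4 : g 4 = 0 := by
    have h := hgm 4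
    simp only [mvecOf, Finsupp.coe_add, Pi.add_apply, Finsupp.single_apply] at h
    simpa using h
  have hmem2 : ∀ k, k ∈ g.support → g k ≠ 0 := fun k hk => Finsupp.mem_support_iff.mp hk
  have hi1 : i ≠ 1 := by rintro rfl; exact hmem2 2 (by rw [hgi.2]; decide) hg2
  have hi2 : i ≠ 2 := by rintro rfl; exact hmem2 2 (by rw [hgi.2]; decide) hg2
  have hi3 : i ≠ 3 := by rintro rfl; exact hmem2 4 (by rw [hgi.2]; decide) hg4
  have hi4 : i ≠ 4 := by rintro rfl; exact hmem2 4 (by rw [hgi.2]; decide) hg4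
  have hall : ∀ j : Fin 5, j ≠ 1 → j ≠ 2 → j ≠ 3 → j ≠ 4 → j = 0 := by decide
  rw [hall i hi1 hi2 hi3 hi4] at hgi
  rw [(by decide : (0 : Fin 5) + 1 = 1)] at hgi
  refine aux_nodouble ha hb hab hgi ?_ ?_
  · have h := hgm 0
    have hr : mvecOf I 0 = nuExp I 0 1 := by simp [mvecOf, Finsupp.single_apply]
    rw [hr] at h; exact h
  · have h := hgm 1
    have hr : mvecOf I 1 = nuExp I 1 0 := by simp [mvecOf, Finsupp.single_apply]
    rw [hr] at h; exact h

lemma aux_u (hmon : IsMonomialIdeal I) (h2 : IsSupportTwo I)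
    (hcyc : ∀ i j : Fin 5, (underGraph I).Adj i j ↔ (i ≠ j ∧ (j = i + 1 ∨ i = j + 1)))
    {a b : Fin 5 →₀ ℕ} (ha : a ∈ supportedOn I 0 1) (hb : b ∈ supportedOn I 0 1)
    (hab : a ≠ b) {P : Ideal (MvPolynomial (Fin 5) K)} (hP : P ∈ I.minimalPrimes) :
    ∃ u, u ∉ P ∧ u * (monomial (mvecOf I) (1 : K) : MvPolynomial (Fin 5) K) ∈ I := by
  have hPp : P.IsPrime := hP.1.1
  have hne01 : (supportedOn I 0 1).Nonempty := ⟨a, ha⟩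
  have hne10 : (supportedOn I 1 0).Nonempty := by rw [aux_comm]; exact hne01
  have hadj32 : (underGraph I).Adj 3 2 := (hcyc 3 2).mpr ⟨by decide, Or.inr (by decide)⟩
  have hne32 : (supportedOn I 3 2).Nonempty := (show (3 : Fin 5) ≠ 2 ∧ (supportedOn I 3 2).Nonempty from hadj32).2
  obtain ⟨g, hg01, hg0⟩ := aux_attain hne01
  obtain ⟨h, hh10, hh1⟩ := aux_attain hne10
  have hh01 : h ∈ supportedOn I 0 1 := by rw [← aux_comm I 1 0]; exact hh10
  have hg10 : g ∈ supportedOn I 1 0 := by rw [aux_comm]; exact hg01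
  obtain ⟨c, hc32, hc3⟩ := aux_attain hne32
  have hmul : ∀ (k : Fin 5) (n : ℕ) (d : Fin 5 →₀ ℕ), d ∈ minGens I →
      d ≤ Finsupp.single k n + mvecOf I →
      (X k : MvPolynomial (Fin 5) K) ^ n * monomial (mvecOf I) 1 ∈ I := by
    intro k n d hd hdle
    rw [X_pow_eq_monomial, monomial_mul, one_mul]
    exact aux_mono hdle hd.1
  by_cases hx0 : (X 0 : MvPolynomial (Fin 5) K) ∈ P
  case neg =>
    refine ⟨X 0 ^ (h 0 - nuExp I 0 1), fun hmem => hx0 (hPp.mem_of_pow_mem _ hmem),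
      hmul 0 _ h hh01.1 ?_⟩
    have hge : nuExp I 0 1 ≤ h 0 := aux_sInf_le hh01
    rw [Finsupp.le_def]
    intro k
    fin_cases k
    · show h 0 ≤ (Finsupp.single (0 : Fin 5) (h 0 - nuExp I 0 1) + mvecOf I) 0
      have hr : (Finsupp.single (0 : Fin 5) (h 0 - nuExp I 0 1) + mvecOf I) 0
          = (h 0 - nuExp I 0 1) + nuExp I 0 1 := by simp [mvecOf, Finsupp.single_apply]
      rw [hr]; omega
    · show h 1 ≤ (Finsupp.single (0 : Fin 5) (h 0 - nuExp I 0 1) + mvecOf I) 1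
      have hr : (Finsupp.single (0 : Fin 5) (h 0 - nuExp I 0 1) + mvecOf I) 1
          = nuExp I 1 0 := by simp [mvecOf, Finsupp.single_apply]
      rw [hr, hh1]
    · show h 2 ≤ (Finsupp.single (0 : Fin 5) (h 0 - nuExp I 0 1) + mvecOf I) 2
      rw [aux_zero hh01.2 (by decide : (2 : Fin 5) ≠ 0) (by decide : (2 : Fin 5) ≠ 1)]
      exact Nat.zero_le _
    · show h 3 ≤ (Finsupp.single (0 : Fin 5) (h 0 - nuExp I 0 1) + mvecOf I) 3
      rw [aux_zero hh01.2 (by decide : (3 : Fin 5) ≠ 0) (by decide : (3 : Fin 5) ≠ 1)]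
      exact Nat.zero_le _
    · show h 4 ≤ (Finsupp.single (0 : Fin 5) (h 0 - nuExp I 0 1) + mvecOf I) 4
      rw [aux_zero hh01.2 (by decide : (4 : Fin 5) ≠ 0) (by decide : (4 : Fin 5) ≠ 1)]
      exact Nat.zero_le _
  by_cases hx1 : (X 1 : MvPolynomial (Fin 5) K) ∈ P
  case neg =>
    refine ⟨X 1 ^ (g 1 - nuExp I 1 0), fun hmem => hx1 (hPp.mem_of_pow_mem _ hmem),
      hmul 1 _ g hg01.1 ?_⟩
    have hge : nuExp I 1 0 ≤ g 1 := aux_sInf_le hg10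
    rw [Finsupp.le_def]
    intro k
    fin_cases k
    · show g 0 ≤ (Finsupp.single (1 : Fin 5) (g 1 - nuExp I 1 0) + mvecOf I) 0
      have hr : (Finsupp.single (1 : Fin 5) (g 1 - nuExp I 1 0) + mvecOf I) 0
          = nuExp I 0 1 := by simp [mvecOf, Finsupp.single_apply]
      rw [hr, hg0]
    · show g 1 ≤ (Finsupp.single (1 : Fin 5) (g 1 - nuExp I 1 0) + mvecOf I) 1
      have hr : (Finsupp.single (1 : Fin 5) (g 1 - nuExp I 1 0) + mvecOf I) 1
          = (g 1 - nuExp I 1 0) + nuExp I 1 0 := by simp [mvecOf, Finsupp.single_apply]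
      rw [hr]; omega
    · show g 2 ≤ (Finsupp.single (1 : Fin 5) (g 1 - nuExp I 1 0) + mvecOf I) 2
      rw [aux_zero hg01.2 (by decide : (2 : Fin 5) ≠ 0) (by decide : (2 : Fin 5) ≠ 1)]
      exact Nat.zero_le _
    · show g 3 ≤ (Finsupp.single (1 : Fin 5) (g 1 - nuExp I 1 0) + mvecOf I) 3
      rw [aux_zero hg01.2 (by decide : (3 : Fin 5) ≠ 0) (by decide : (3 : Fin 5) ≠ 1)]
      exact Nat.zero_le _
    · show g 4 ≤ (Finsupp.single (1 : Fin 5) (g 1 - nuExp I 1 0) + mvecOf I) 4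
      rw [aux_zero hg01.2 (by decide : (4 : Fin 5) ≠ 0) (by decide : (4 : Fin 5) ≠ 1)]
      exact Nat.zero_le _
  by_cases hx2 : (X 2 : MvPolynomial (Fin 5) K) ∈ P
  case neg =>
    refine ⟨X 2 ^ (c 2), fun hmem => hx2 (hPp.mem_of_pow_mem _ hmem),
      hmul 2 _ c hc32.1 ?_⟩
    rw [Finsupp.le_def]
    intro k
    fin_cases k
    · show c 0 ≤ (Finsupp.single (2 : Fin 5) (c 2) + mvecOf I) 0
      rw [aux_zero hc32.2 (by decide : (0 : Fin 5) ≠ 3) (by decide : (0 : Fin 5) ≠ 2)]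
      exact Nat.zero_le _
    · show c 1 ≤ (Finsupp.single (2 : Fin 5) (c 2) + mvecOf I) 1
      rw [aux_zero hc32.2 (by decide : (1 : Fin 5) ≠ 3) (by decide : (1 : Fin 5) ≠ 2)]
      exact Nat.zero_le _
    · show c 2 ≤ (Finsupp.single (2 : Fin 5) (c 2) + mvecOf I) 2
      have hr : (Finsupp.single (2 : Fin 5) (c 2) + mvecOf I) 2 = c 2 := by
        simp [mvecOf, Finsupp.single_apply]
      rw [hr]
    · show c 3 ≤ (Finsupp.single (2 : Fin 5) (c 2) + mvecOf I) 3
      have hr : (Finsupp.single (2 : Fin 5) (c 2) + mvecOf I) 3 = nuExp I 3 2 := by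
        simp [mvecOf, Finsupp.single_apply]
      rw [hr, hc3]
    · show c 4 ≤ (Finsupp.single (2 : Fin 5) (c 2) + mvecOf I) 4
      rw [aux_zero hc32.2 (by decide : (4 : Fin 5) ≠ 3) (by decide : (4 : Fin 5) ≠ 2)]
      exact Nat.zero_le _
  -- All of x0, x1, x2 lie in P : contradiction with minimality of P.
  exfalso
  have hadj34 : (underGraph I).Adj 3 4 := (hcyc 3 4).mpr ⟨by decide, Or.inl (by decide)⟩
  obtain ⟨d, hd34⟩ := (show (3 : Fin 5) ≠ 4 ∧ (supportedOn I 3 4).Nonempty from hadj34).2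
  have hdP : (monomial d (1 : K) : MvPolynomial (Fin 5) K) ∈ P := hP.1.2 hd34.1.1
  have hfact : (monomial d (1 : K) : MvPolynomial (Fin 5) K) = X 3 ^ d 3 * X 4 ^ d 4 := by
    rw [monomial_eq, map_one, one_mul, Finsupp.prod, hd34.2,
      Finset.prod_pair (by decide : (3 : Fin 5) ≠ 4)]
  rw [hfact] at hdP
  have h34 : (X 3 : MvPolynomial (Fin 5) K) ∈ P ∨ (X 4 : MvPolynomial (Fin 5) K) ∈ P := by
    rcases hPp.mem_or_mem hdP with hq | hq
    · exact Or.inl (hPp.mem_of_pow_mem _ hq)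
    · exact Or.inr (hPp.mem_of_pow_mem _ hq)
  have hgen : ∀ s : Set (Fin 5), (∀ i : Fin 5, i ∈ s ∨ i + 1 ∈ s) → (1 : Fin 5) ∉ s →
      (∀ i ∈ s, (X i : MvPolynomial (Fin 5) K) ∈ P) → False := by
    intro s hcov h1s hXP
    have hQle : Ideal.span ((X : Fin 5 → MvPolynomial (Fin 5) K) '' s) ≤ P := by
      rw [Ideal.span_le]; rintro _ ⟨i, hi, rfl⟩; exact hXP i hi
    have hPQ : P ≤ Ideal.span ((X : Fin 5 → MvPolynomial (Fin 5) K) '' s) :=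
      hP.2 ⟨aux_prime s, aux_cover hmon h2 hcyc hcov⟩ hQle
    exact aux_X_not_mem h1s (hPQ hx1)
  rcases h34 with h3 | h4
  · refine hgen {0, 2, 3} ?_ ?_ ?_
    · intro i
      fin_cases i <;> simp [Set.mem_insert_iff]
    · simp [Set.mem_insert_iff]
    · intro i hi
      rcases hi with rfl | rfl | rfl
      exacts [hx0, hx2, h3]
  · refine hgen {0, 2, 4} ?_ ?_ ?_
    · intro i
      fin_cases i <;> simp [Set.mem_insert_iff]
    · simp [Set.mem_insert_iff]
    · intro i hi
      rcases hi with rfl | rfl | rfl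
      exacts [hx0, hx2, h4]

end Auxx6

theorem stmt15 {K : Type*} [Field K] (I : Ideal (MvPolynomial (Fin 5) K))
    (hmon : IsMonomialIdeal I) (h2 : IsSupportTwo I)
    (hcyc : ∀ i j : Fin 5, (underGraph I).Adj i j ↔
      (i ≠ j ∧ (j = i + 1 ∨ i = j + 1)))
    (a b : Fin 5 →₀ ℕ) (ha : a ∈ supportedOn I 0 1)
    (hb : b ∈ supportedOn I 0 1) (hab : a ≠ b) :
    (monomial (Finsupp.single 0 (nuExp I 0 1) + Finsupp.single 1 (nuExp I 1 0) +
        Finsupp.single 3 (nuExp I 3 2)) (1 : K) : MvPolynomial (Fin 5) K) ∈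
      symbolicPower I 1 ∧
    (monomial (Finsupp.single 0 (nuExp I 0 1) + Finsupp.single 1 (nuExp I 1 0) +
        Finsupp.single 3 (nuExp I 3 2)) (1 : K) : MvPolynomial (Fin 5) K) ∉ I ∧
    ∃ P ∈ associatedPrimes (MvPolynomial (Fin 5) K) (MvPolynomial (Fin 5) K ⧸ I),
      P ∉ I.minimalPrimes := by
  have hnot := aux_not_mem hmon h2 hcyc ha hb hab
  have hmv : Finsupp.single 0 (nuExp I 0 1) + Finsupp.single 1 (nuExp I 1 0) +
      Finsupp.single 3 (nuExp I 3 2) = mvecOf I := rfl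
  rw [hmv]
  refine ⟨?_, hnot, ?_⟩
  · simp only [symbolicPower]
    refine (Submodule.mem_iInf _).mpr ?_
    rintro ⟨P, hPm⟩
    obtain ⟨u, huP, hum⟩ := aux_u hmon h2 hcyc ha hb hab hPm
    exact mem_localizedComponent _ huP (by rw [pow_one]; exact hum)
  · obtain ⟨P, hPass, hPcol⟩ := aux_assprime hnot
    refine ⟨P, hPass, fun hPmin => ?_⟩
    obtain ⟨u, huP, hum⟩ := aux_u hmon h2 hcyc ha hb hab hPmin
    exact huP (hPcol u hum)
end

section
/- Let I be a support-2 monomial ideal in K[x1,x2,x3] whose underlying graph is the triangle C_3 on vertices x_i, x_j, x_k. If I has at least two minimal generators supported on {x_i,x_j} and at least two supported on {x_j,x_k}, then the maximal ideal ⟨x_i, x_j, x_k⟩ is an associated prime of I. -/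
set_option synthInstance.maxHeartbeats 1000000
set_option maxHeartbeats 1000000

open MvPolynomial

section Aux

variable {K : Type*} [Field K]

lemma fin3_tri {i j k : Fin 3} (hij : i ≠ j) (hjk : j ≠ k) (hik : i ≠ k) (u : Fin 3) :
    u = i ∨ u = j ∨ u = k := by
  have h1 := i.isLt; have h2 := j.isLt; have h3 := k.isLt; have h4 := u.isLt
  rw [Ne, Fin.ext_iff] at hij hjk hik
  rw [Fin.ext_iff, Fin.ext_iff, Fin.ext_iff]
  omega

lemma mem_of_le_minGen {I : Ideal (MvPolynomial (Fin 3) K)} {g e : Fin 3 →₀ ℕ}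
    (hge : g ≤ e) (hg : (monomial g (1 : K) : MvPolynomial (Fin 3) K) ∈ I) :
    (monomial e (1 : K) : MvPolynomial (Fin 3) K) ∈ I := by
  have : (monomial e (1 : K) : MvPolynomial (Fin 3) K)
      = monomial (e - g) 1 * monomial g 1 := by
    rw [monomial_mul, one_mul, tsub_add_cancel_of_le hge]
  rw [this]
  exact Ideal.mul_mem_left _ _ hg

lemma exists_minGen_le (I : Ideal (MvPolynomial (Fin 3) K)) :
    ∀ e : Fin 3 →₀ ℕ, (monomial e (1 : K) : MvPolynomial (Fin 3) K) ∈ I →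
      ∃ g ∈ minGens I, g ≤ e := by
  suffices H : ∀ N : ℕ, ∀ e : Fin 3 →₀ ℕ, (∑ u, e u) = N →
      (monomial e (1 : K) : MvPolynomial (Fin 3) K) ∈ I → ∃ g ∈ minGens I, g ≤ e by
    intro e he; exact H _ e rfl he
  intro N
  induction N using Nat.strong_induction_on with
  | _ N ih =>
    intro e hN he
    by_cases hmin : ∀ b : Fin 3 →₀ ℕ,
        (monomial b (1 : K) : MvPolynomial (Fin 3) K) ∈ I → b ≤ e → b = e
    · exact ⟨e, ⟨he, hmin⟩, le_refl e⟩
    · push_neg at hmin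
      obtain ⟨b, hbI, hble, hbne⟩ := hmin
      have hex : ∃ u, b u ≠ e u := by
        by_contra h; push_neg at h; exact hbne (Finsupp.ext h)
      obtain ⟨u0, hu0⟩ := hex
      have hlt : (∑ u, b u) < N := by
        rw [← hN]
        exact Finset.sum_lt_sum (fun u _ => hble u)
          ⟨u0, Finset.mem_univ _, lt_of_le_of_ne (hble u0) hu0⟩
      obtain ⟨g, hg, hgle⟩ := ih _ hlt b rfl hbI
      exact ⟨g, hg, hgle.trans hble⟩

end Aux

section Aux2

variable {K : Type*} [Field K]

lemma supportedOn_comm (I : Ideal (MvPolynomial (Fin 3) K)) (u w : Fin 3) :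
    supportedOn I u w = supportedOn I w u := by
  unfold supportedOn
  ext g
  rw [Finset.pair_comm]

lemma classify_support {I : Ideal (MvPolynomial (Fin 3) K)} (h2 : IsSupportTwo I)
    {i j k : Fin 3} (hij : i ≠ j) (hjk : j ≠ k) (hik : i ≠ k)
    {g : Fin 3 →₀ ℕ} (hg : g ∈ minGens I) :
    g ∈ supportedOn I i j ∨ g ∈ supportedOn I j k ∨ g ∈ supportedOn I i k := by
  have hcard := h2 g hg
  have hsub : g.support ⊆ {i, j, k} := by
    intro u _
    rcases fin3_tri hij hjk hik u with rfl | rfl | rfl <;> simp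
  by_cases hi : i ∈ g.support <;> by_cases hj : j ∈ g.support <;> by_cases hk : k ∈ g.support
  · exfalso
    have h3 : ({i, j, k} : Finset (Fin 3)) ⊆ g.support := by
      intro u hu
      simp only [Finset.mem_insert, Finset.mem_singleton] at hu
      rcases hu with rfl | rfl | rfl <;> assumption
    have : ({i, j, k} : Finset (Fin 3)).card = 3 := by
      rw [Finset.card_insert_of_notMem (by simp [hij, hik]),
        Finset.card_insert_of_notMem (by simp [hjk]), Finset.card_singleton]
    have := Finset.card_le_card h3
    omega
  · left
    refine ⟨hg, ?_⟩
    have hpair : ({i, j} : Finset (Fin 3)) ⊆ g.support := by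
      intro u hu; simp only [Finset.mem_insert, Finset.mem_singleton] at hu
      rcases hu with rfl | rfl <;> assumption
    have hc2 : ({i, j} : Finset (Fin 3)).card = 2 := by
      rw [Finset.card_insert_of_notMem (by simp [hij]), Finset.card_singleton]
    exact (Finset.eq_of_subset_of_card_le hpair (by omega)).symm
  · right; right
    refine ⟨hg, ?_⟩
    have hpair : ({i, k} : Finset (Fin 3)) ⊆ g.support := by
      intro u hu; simp only [Finset.mem_insert, Finset.mem_singleton] at hu
      rcases hu with rfl | rfl <;> assumption
    have hc2 : ({i, k} : Finset (Fin 3)).card = 2 := by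
      rw [Finset.card_insert_of_notMem (by simp [hik]), Finset.card_singleton]
    exact (Finset.eq_of_subset_of_card_le hpair (by omega)).symm
  · exfalso
    have : g.support ⊆ {i} := by
      intro u hu
      rcases fin3_tri hij hjk hik u with rfl | rfl | rfl
      · simp
      · exact absurd hu hj
      · exact absurd hu hk
    have h0 := Finset.card_le_card this
    simp only [Finset.card_singleton, Finset.card_empty] at h0
    omega
  · right; left
    refine ⟨hg, ?_⟩
    have hpair : ({j, k} : Finset (Fin 3)) ⊆ g.support := by
      intro u hu; simp only [Finset.mem_insert, Finset.mem_singleton] at hu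
      rcases hu with rfl | rfl <;> assumption
    have hc2 : ({j, k} : Finset (Fin 3)).card = 2 := by
      rw [Finset.card_insert_of_notMem (by simp [hjk]), Finset.card_singleton]
    exact (Finset.eq_of_subset_of_card_le hpair (by omega)).symm
  · exfalso
    have : g.support ⊆ {j} := by
      intro u hu
      rcases fin3_tri hij hjk hik u with rfl | rfl | rfl
      · exact absurd hu hi
      · simp
      · exact absurd hu hk
    have h0 := Finset.card_le_card this
    simp only [Finset.card_singleton, Finset.card_empty] at h0
    omega
  · exfalso
    have : g.support ⊆ {k} := by
      intro u hu
      rcases fin3_tri hij hjk hik u with rfl | rfl | rfl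
      · exact absurd hu hi
      · exact absurd hu hj
      · simp
    have := Finset.card_le_card this
    simp at this; omega
  · exfalso
    have : g.support ⊆ (∅ : Finset (Fin 3)) := by
      intro u hu
      rcases fin3_tri hij hjk hik u with rfl | rfl | rfl
      · exact absurd hu hi
      · exact absurd hu hj
      · exact absurd hu hk
    have h0 := Finset.card_le_card this
    simp only [Finset.card_singleton, Finset.card_empty] at h0
    omega

end Aux2

section Aux3

variable {K : Type*} [Field K]

lemma supp_apply_pos {g : Fin 3 →₀ ℕ} {u w t : Fin 3} (hs : g.support = {u, w}) :
    1 ≤ g u ∧ 1 ≤ g w ∧ (t ≠ u → t ≠ w → g t = 0) := by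
  refine ⟨?_, ?_, fun h1 h2 => ?_⟩
  · have : u ∈ g.support := by rw [hs]; simp
    rw [Finsupp.mem_support_iff] at this; omega
  · have : w ∈ g.support := by rw [hs]; simp
    rw [Finsupp.mem_support_iff] at this; omega
  · have : t ∉ g.support := by rw [hs]; simp [h1, h2]
    rwa [Finsupp.notMem_support_iff] at this

lemma eq_of_exp_eq {I : Ideal (MvPolynomial (Fin 3) K)}
    {i j k : Fin 3} (hij : i ≠ j) (hjk : j ≠ k) (hik : i ≠ k)
    {a b : Fin 3 →₀ ℕ} (ha : a ∈ supportedOn I i j) (hb : b ∈ supportedOn I i j)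
    (h : a j = b j) : a = b := by
  have key : ∀ x y : Fin 3 →₀ ℕ, x ∈ supportedOn I i j → y ∈ supportedOn I i j →
      x j = y j → x i ≤ y i → x = y := by
    intro x y hx hy hxy hxi
    have hxk := (supp_apply_pos (t := k) hx.2).2.2 (Ne.symm hik) (Ne.symm hjk)
    have hle : x ≤ y := by
      intro u
      rcases fin3_tri hij hjk hik u with rfl | rfl | rfl
      · exact hxi
      · exact le_of_eq hxy
      · rw [hxk]; exact Nat.zero_le _
    exact hy.1.2 x hx.1.1 hle
  rcases le_total (a i) (b i) with hle | hle
  · exact key a b ha hb h hle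
  · exact (key b a hb ha h.symm hle).symm

lemma span_xijk_eq_ker {i j k : Fin 3} (hij : i ≠ j) (hjk : j ≠ k) (hik : i ≠ k) :
    Ideal.span {(X i : MvPolynomial (Fin 3) K), X j, X k}
      = RingHom.ker (constantCoeff : MvPolynomial (Fin 3) K →+* K) := by
  have himg : ({(X i : MvPolynomial (Fin 3) K), X j, X k} : Set (MvPolynomial (Fin 3) K))
      = X '' ({i, j, k} : Set (Fin 3)) := by
    simp [Set.image_insert_eq]
  rw [himg]
  ext p
  rw [mem_ideal_span_X_image, RingHom.mem_ker, constantCoeff_eq]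
  constructor
  · intro h
    by_contra hc
    have h0 : (0 : Fin 3 →₀ ℕ) ∈ p.support := by rwa [mem_support_iff]
    obtain ⟨u, _, hu⟩ := h 0 h0
    simp at hu
  · intro h m hm
    have hmne : m ≠ 0 := by
      rintro rfl
      rw [mem_support_iff] at hm
      exact hm h
    obtain ⟨u, hu⟩ := Finsupp.ne_iff.mp hmne
    refine ⟨u, ?_, by simpa using hu⟩
    rcases fin3_tri hij hjk hik u with rfl | rfl | rfl <;> simp

lemma span_xijk_isMaximal {i j k : Fin 3} (hij : i ≠ j) (hjk : j ≠ k) (hik : i ≠ k) :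
    (Ideal.span {(X i : MvPolynomial (Fin 3) K), X j, X k}).IsMaximal := by
  rw [span_xijk_eq_ker hij hjk hik]
  exact RingHom.ker_isMaximal_of_surjective _ (fun x => ⟨C x, constantCoeff_C _ x⟩)

end Aux3

section Aux4

variable {K : Type*} [Field K]

/-- The second-smallest exponent of `x_u` among minimal generators supported on `{u,w}`. -/
noncomputable def secondExp (I : Ideal (MvPolynomial (Fin 3) K)) (u w : Fin 3) : ℕ :=
  sInf {n | n ∈ (fun a => a u) '' supportedOn I u w ∧ n ≠ nuExp I u w}

lemma edge_data {I : Ideal (MvPolynomial (Fin 3) K)}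
    {i j k : Fin 3} (hij : i ≠ j) (hjk : j ≠ k) (hik : i ≠ k)
    {a b : Fin 3 →₀ ℕ} (ha : a ∈ supportedOn I i j) (hb : b ∈ supportedOn I i j)
    (hab : a ≠ b) :
    ∃ g1 g2 : Fin 3 →₀ ℕ, g1 ∈ supportedOn I i j ∧ g2 ∈ supportedOn I i j ∧
      g1 j = nuExp I j i ∧ g2 j = secondExp I j i ∧ nuExp I j i < secondExp I j i ∧
      g2 i < g1 i ∧ (∀ g ∈ supportedOn I i j, g j < secondExp I j i → g = g1) := by
  have hcomm : supportedOn I j i = supportedOn I i j := supportedOn_comm I j i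
  set A : Set ℕ := (fun a => a j) '' supportedOn I j i with hA
  have hAne : A.Nonempty := ⟨a j, a, by rw [hcomm]; exact ha, rfl⟩
  have hnu : nuExp I j i = sInf A := rfl
  have hq : nuExp I j i ∈ A := by rw [hnu]; exact Nat.sInf_mem hAne
  obtain ⟨g1, hg1, hg1j⟩ := hq
  simp only [] at hg1j
  rw [hcomm] at hg1
  set A' : Set ℕ := {n | n ∈ A ∧ n ≠ nuExp I j i} with hA'
  have hsec : secondExp I j i = sInf A' := rfl
  have habj : a j ≠ b j := fun h => hab (eq_of_exp_eq hij hjk hik ha hb h)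
  have hA'ne : A'.Nonempty := by
    by_cases haq : a j = nuExp I j i
    · exact ⟨b j, ⟨b, by rw [hcomm]; exact hb, rfl⟩, by rw [← haq]; exact habj.symm⟩
    · exact ⟨a j, ⟨a, by rw [hcomm]; exact ha, rfl⟩, haq⟩
  have hQ : secondExp I j i ∈ A' := by rw [hsec]; exact Nat.sInf_mem hA'ne
  obtain ⟨⟨g2, hg2, hg2j⟩, hQne⟩ := hQ
  simp only [] at hg2j
  rw [hcomm] at hg2
  have hlt : nuExp I j i < secondExp I j i := by
    have hle : nuExp I j i ≤ secondExp I j i := by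
      rw [hnu]; exact Nat.sInf_le (by exact ⟨g2, by rw [hcomm]; exact hg2, hg2j⟩)
    exact lt_of_le_of_ne hle (Ne.symm hQne)
  have hne12 : g1 ≠ g2 := by
    intro h
    rw [h, hg2j] at hg1j
    omega
  have hilt : g2 i < g1 i := by
    by_contra hc
    push_neg at hc
    have hk1 := (supp_apply_pos (t := k) hg1.2).2.2 (Ne.symm hik) (Ne.symm hjk)
    have hle : g1 ≤ g2 := by
      intro u
      rcases fin3_tri hij hjk hik u with rfl | rfl | rfl
      · exact hc
      · rw [hg1j, hg2j]; omega
      · rw [hk1]; exact Nat.zero_le _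
    exact hne12 (hg2.1.2 g1 hg1.1.1 hle)
  refine ⟨g1, g2, hg1, hg2, hg1j, hg2j, hlt, hilt, ?_⟩
  intro g hg hgQ
  have hgA : g j ∈ A := ⟨g, by rw [hcomm]; exact hg, rfl⟩
  have hgq : g j = nuExp I j i := by
    by_contra hne
    have : g j ∈ A' := ⟨hgA, hne⟩
    have := Nat.sInf_le this
    rw [← hsec] at this
    omega
  exact eq_of_exp_eq hij hjk hik hg hg1 (by rw [hgq, hg1j])

end Aux4

section Key

variable {K : Type*} [Field K]

lemma key_lemma {I : Ideal (MvPolynomial (Fin 3) K)} (h2 : IsSupportTwo I)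
    {i j k : Fin 3} (hij : i ≠ j) (hjk : j ≠ k) (hik : i ≠ k)
    {a b : Fin 3 →₀ ℕ} (ha : a ∈ supportedOn I i j) (hb : b ∈ supportedOn I i j)
    (hab : a ≠ b) {c : Fin 3 →₀ ℕ} (hc : c ∈ supportedOn I j k)
    (hcase : nuExp I j k < secondExp I j i) :
    Ideal.span {(X i : MvPolynomial (Fin 3) K), X j, X k} ∈
      associatedPrimes (MvPolynomial (Fin 3) K) (MvPolynomial (Fin 3) K ⧸ I) := by
  obtain ⟨g1, g2, hg1, hg2, hg1j, hg2j, hqlt, hilt, huniq⟩ := edge_data hij hjk hik ha hb hab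
  set Q := secondExp I j i with hQdef
  set phat := g1 i with hphat
  -- the generator on {j,k} with minimal j-exponent
  have hcomm : supportedOn I k j = supportedOn I j k := supportedOn_comm I k j
  have hBne : ((fun a => a j) '' supportedOn I j k).Nonempty := ⟨c j, c, hc, rfl⟩
  have hr : nuExp I j k ∈ (fun a => a j) '' supportedOn I j k := Nat.sInf_mem hBne
  obtain ⟨h1, hh1, hh1j⟩ := hr
  simp only [] at hh1j
  -- the set W of k-exponents
  set W : Set ℕ := {n | (∃ h, h ∈ supportedOn I j k ∧ h j < Q ∧ h k = n) ∨
    (∃ f, f ∈ supportedOn I i k ∧ f i < phat ∧ f k = n)} with hW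
  have hWne : W.Nonempty := ⟨h1 k, Or.inl ⟨h1, hh1, by omega, rfl⟩⟩
  set m := sInf W with hm
  have hmW : m ∈ W := Nat.sInf_mem hWne
  have hmle : ∀ n ∈ W, m ≤ n := fun n hn => Nat.sInf_le hn
  -- positivity facts
  have hg1supp := supp_apply_pos (t := k) hg1.2
  have hg2supp := supp_apply_pos (t := k) hg2.2
  have hp1 : 1 ≤ phat := hg1supp.1
  have hq1 : 1 ≤ g1 j := hg1supp.2.1
  have hQ2 : 2 ≤ Q := by omega
  have hm1 : 1 ≤ m := by
    rcases hmW with ⟨h, hh, _, hhk⟩ | ⟨f, hf, _, hfk⟩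
    · have := (supp_apply_pos (t := i) hh.2).2.1; omega
    · have := (supp_apply_pos (t := j) hf.2).2.1; omega
  -- the witness monomial exponent
  set v : Fin 3 →₀ ℕ := Finsupp.single i (phat - 1) + Finsupp.single j (Q - 1)
    + Finsupp.single k (m - 1) with hv
  have hvi : v i = phat - 1 := by
    simp [hv, Finsupp.single_apply, hij, hik, Ne.symm hij, Ne.symm hik]
  have hvj : v j = Q - 1 := by
    simp [hv, Finsupp.single_apply, hij, hjk, Ne.symm hij, Ne.symm hjk]
  have hvk : v k = m - 1 := by
    simp [hv, Finsupp.single_apply, hik, hjk, Ne.symm hik, Ne.symm hjk]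
  clear_value phat Q m v
  -- v is not in I
  have hvI : (monomial v (1 : K) : MvPolynomial (Fin 3) K) ∉ I := by
    intro hmem
    obtain ⟨g, hgmin, hgle⟩ := exists_minGen_le I v hmem
    rcases classify_support h2 hij hjk hik hgmin with hg | hg | hg
    · have hgj : g j ≤ v j := hgle j
      rw [hvj] at hgj
      have : g = g1 := huniq g hg (by omega)
      have hgi : g i ≤ v i := hgle i
      rw [hvi, this, ← hphat] at hgi
      omega
    · have hgj : g j ≤ v j := hgle j
      rw [hvj] at hgj
      have hgW : g k ∈ W := Or.inl ⟨g, hg, by omega, rfl⟩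
      have := hmle _ hgW
      have hgk : g k ≤ v k := hgle k
      rw [hvk] at hgk
      omega
    · have hgi : g i ≤ v i := hgle i
      rw [hvi] at hgi
      have h1p : 1 ≤ g i := (supp_apply_pos (t := j) hg.2).1
      have hgW : g k ∈ W := Or.inr ⟨g, hg, by omega, rfl⟩
      have := hmle _ hgW
      have hgk : g k ≤ v k := hgle k
      rw [hvk] at hgk
      omega
  -- multiplying by each variable lands in I
  have hstep : ∀ u : Fin 3, (∃ g : Fin 3 →₀ ℕ, g ∈ minGens I ∧ g ≤ Finsupp.single u 1 + v) →
      (X u : MvPolynomial (Fin 3) K) * monomial v 1 ∈ I := by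
    rintro u ⟨g, hgmin, hgle⟩
    have hX : (X u : MvPolynomial (Fin 3) K) * monomial v 1
        = monomial (Finsupp.single u 1 + v) 1 := by
      rw [X, monomial_mul, one_mul]
    rw [hX]
    exact mem_of_le_minGen hgle hgmin.1
  have happly : ∀ u w : Fin 3, ((Finsupp.single u 1 + v : Fin 3 →₀ ℕ)) w = (if u = w then 1 else 0) + v w := by
    intro u w; simp [Finsupp.single_apply]
  have hXi : (X i : MvPolynomial (Fin 3) K) * monomial v 1 ∈ I := by
    refine hstep i ⟨g1, hg1.1, ?_⟩
    intro u
    rw [happly]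
    rcases fin3_tri hij hjk hik u with rfl | rfl | rfl
    · simp only [if_pos rfl, if_true]; rw [hvi, ← hphat]; omega
    · rw [if_neg hij, hvj, hg1j]; omega
    · rw [if_neg hik, hvk, hg1supp.2.2 (Ne.symm hik) (Ne.symm hjk)]; omega
  have hXj : (X j : MvPolynomial (Fin 3) K) * monomial v 1 ∈ I := by
    refine hstep j ⟨g2, hg2.1, ?_⟩
    intro u
    rw [happly]
    rcases fin3_tri hij hjk hik u with rfl | rfl | rfl
    · rw [if_neg (Ne.symm hij), hvi]; omega
    · simp only [if_pos rfl, if_true]; rw [hvj, hg2j]; omega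
    · rw [if_neg hjk, hvk, hg2supp.2.2 (Ne.symm hik) (Ne.symm hjk)]; omega
  have hXk : (X k : MvPolynomial (Fin 3) K) * monomial v 1 ∈ I := by
    rcases hmW with ⟨h, hh, hhQ, hhk⟩ | ⟨f, hf, hfp, hfk⟩
    · refine hstep k ⟨h, hh.1, ?_⟩
      intro u
      rw [happly]
      have hhi : h i = 0 := (supp_apply_pos (t := i) hh.2).2.2 hij hik
      rcases fin3_tri hij hjk hik u with rfl | rfl | rfl
      · rw [if_neg (Ne.symm hik), hvi, hhi]; omega
      · rw [if_neg (Ne.symm hjk), hvj]; omega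
      · simp only [if_pos rfl, if_true]; rw [hvk]; omega
    · refine hstep k ⟨f, hf.1, ?_⟩
      intro u
      rw [happly]
      have hfj : f j = 0 := (supp_apply_pos (t := j) hf.2).2.2 (Ne.symm hij) hjk
      rcases fin3_tri hij hjk hik u with rfl | rfl | rfl
      · rw [if_neg (Ne.symm hik), hvi]; omega
      · rw [if_neg (Ne.symm hjk), hvj, hfj]; omega
      · simp only [if_pos rfl, if_true]; rw [hvk]; omega
  -- assemble the associated prime
  have hmax := span_xijk_isMaximal (K := K) hij hjk hik
  refine isAssociatedPrime_iff.mpr ⟨hmax.isPrime, Ideal.Quotient.mk I (monomial v 1), ?_⟩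
  have hsmul : ∀ r : MvPolynomial (Fin 3) K,
      r • (Ideal.Quotient.mk I (monomial v 1)) = Ideal.Quotient.mk I (r * monomial v 1) :=
    fun r => rfl
  have hle : Ideal.span {(X i : MvPolynomial (Fin 3) K), X j, X k}
      ≤ (Submodule.span (MvPolynomial (Fin 3) K)
          {Ideal.Quotient.mk I (monomial v 1)}).annihilator := by
    rw [Ideal.span_le]
    rintro x (rfl | rfl | rfl) <;>
      · rw [SetLike.mem_coe, Submodule.mem_annihilator_span_singleton, hsmul,
          Ideal.Quotient.eq_zero_iff_mem]
        first
          | exact hXi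
          | exact hXj
          | exact hXk
  have hne : (Submodule.span (MvPolynomial (Fin 3) K)
      {Ideal.Quotient.mk I (monomial v 1)}).annihilator ≠ ⊤ := by
    intro h
    have h1 : (1 : MvPolynomial (Fin 3) K) ∈ (Submodule.span (MvPolynomial (Fin 3) K)
        {Ideal.Quotient.mk I (monomial v 1)}).annihilator := h ▸ Submodule.mem_top
    rw [Submodule.mem_annihilator_span_singleton, hsmul, one_mul,
      Ideal.Quotient.eq_zero_iff_mem] at h1
    exact hvI h1
  rw [hmax.eq_of_le hne hle]
  ext r
  rw [Submodule.mem_annihilator_span_singleton, Submodule.mem_colon_singleton, Submodule.mem_bot]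

end Key

theorem stmt16 {K : Type*} [Field K] (I : Ideal (MvPolynomial (Fin 3) K))
    (hmon : IsMonomialIdeal I) (h2 : IsSupportTwo I)
    (i j k : Fin 3) (hij : i ≠ j) (hjk : j ≠ k) (hik : i ≠ k)
    (htri : ∀ u v : Fin 3, (underGraph I).Adj u v ↔ u ≠ v)
    (a b : Fin 3 →₀ ℕ) (ha : a ∈ supportedOn I i j)
    (hb : b ∈ supportedOn I i j) (hab : a ≠ b)
    (c d : Fin 3 →₀ ℕ) (hc : c ∈ supportedOn I j k)
    (hd : d ∈ supportedOn I j k) (hcd : c ≠ d) :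
    Ideal.span {(X i : MvPolynomial (Fin 3) K), X j, X k} ∈
      associatedPrimes (MvPolynomial (Fin 3) K) (MvPolynomial (Fin 3) K ⧸ I) := by
  have hc' : c ∈ supportedOn I k j := by rwa [supportedOn_comm]
  have hd' : d ∈ supportedOn I k j := by rwa [supportedOn_comm]
  have ha' : a ∈ supportedOn I j i := by rwa [supportedOn_comm]
  by_cases hcase1 : nuExp I j k < secondExp I j i
  · exact key_lemma h2 hij hjk hik ha hb hab hc hcase1
  · by_cases hcase2 : nuExp I j i < secondExp I j k
    · have hres := key_lemma h2 hjk.symm hij.symm (Ne.symm hik) hc' hd' hcd ha' hcase2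
      have hsets : ({(X k : MvPolynomial (Fin 3) K), X j, X i} : Set (MvPolynomial (Fin 3) K))
          = {X i, X j, X k} := by
        ext p; simp only [Set.mem_insert_iff, Set.mem_singleton_iff]; tauto
      rwa [hsets] at hres
    · exfalso
      push_neg at hcase1 hcase2
      obtain ⟨_, _, _, _, _, _, hlt1, _, _⟩ := edge_data hij hjk hik ha hb hab
      obtain ⟨_, _, _, _, _, _, hlt2, _, _⟩ :=
        edge_data hjk.symm hij.symm (Ne.symm hik) hc' hd' hcd
      omega
end

section
/- Let I be a support-2 monomial ideal in K[x_i,x_j,x_k] whose underlying graph is the triangle on x_i,x_j,x_k, with exactly one minimal generator on each of the edges {x_i,x_k} and {x_j,x_k} (with x_i-exponent w_{i,k} and x_j-exponent w_{j,k} respectively), and at least two minimal generators on {x_i,x_j}. Then the maximal ideal ⟨x_i,x_j,x_k⟩ is NOT an associated prime of I if and only if w_{i,k} ≥ μ_{i,j} and w_{j,k} ≥ μ_{j,i}, where μ_{i,j} (resp. μ_{j,i}) is the maximal exponent of x_i (resp. x_j) among generators supported on {x_i,x_j}. -/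
set_option synthInstance.maxHeartbeats 1000000
set_option maxHeartbeats 1000000

open MvPolynomial

section AuxLemmas

open MvPolynomial

variable {K : Type*} [Field K] {σ : Type*}

/-- If a polynomial in a monomial span has a nonzero coefficient at `m`,
then some generator exponent is `≤ m`. -/
theorem aux_exists_le_of_coeff {A : Set (σ →₀ ℕ)} {p : MvPolynomial σ K}
    (hp : p ∈ Ideal.span ((fun a => (monomial a (1 : K) : MvPolynomial σ K)) '' A))
    {m : σ →₀ ℕ} (hm : coeff m p ≠ 0) : ∃ a ∈ A, a ≤ m := by
  rw [Ideal.span, Submodule.mem_span_set] at hp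
  obtain ⟨c, hc, rfl⟩ := hp
  rw [Finsupp.sum, coeff_sum] at hm
  obtain ⟨q, hq, hq0⟩ := Finset.exists_ne_zero_of_sum_ne_zero hm
  obtain ⟨a, haA, rfl⟩ := hc hq
  rw [smul_eq_mul, coeff_mul_monomial'] at hq0
  split_ifs at hq0 with h
  · exact ⟨a, haA, h⟩
  · exact absurd rfl hq0

theorem aux_mono_mem_of_le {A : Set (σ →₀ ℕ)} {a b : σ →₀ ℕ} (haA : a ∈ A) (hab : a ≤ b) :
    (monomial b (1 : K) : MvPolynomial σ K) ∈
      Ideal.span ((fun a => (monomial a (1 : K) : MvPolynomial σ K)) '' A) := by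
  have : (monomial b (1 : K) : MvPolynomial σ K) = monomial (b - a) 1 * monomial a 1 := by
    rw [monomial_mul, one_mul, tsub_add_cancel_of_le hab]
  rw [this]
  exact Ideal.mul_mem_left _ _ (Ideal.subset_span ⟨a, haA, rfl⟩)

/-- In a monomial ideal, every "term" of a member is a member. -/
theorem aux_term_mem {I : Ideal (MvPolynomial σ K)} (hmon : IsMonomialIdeal I)
    {p : MvPolynomial σ K} (hp : p ∈ I) {m : σ →₀ ℕ} (hm : coeff m p ≠ 0) :
    (monomial m (1 : K) : MvPolynomial σ K) ∈ I := by
  obtain ⟨A, rfl⟩ := hmon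
  obtain ⟨a, haA, hle⟩ := aux_exists_le_of_coeff hp hm
  exact aux_mono_mem_of_le haA hle

theorem aux_exists_minGen {I : Ideal (MvPolynomial σ K)} {b : σ →₀ ℕ}
    (hb : (monomial b (1 : K) : MvPolynomial σ K) ∈ I) :
    ∃ g ∈ minGens I, g ≤ b := by
  have hwf : WellFounded ((· < ·) : (σ →₀ ℕ) → (σ →₀ ℕ) → Prop) := wellFounded_lt
  have hne : b ∈ {c : σ →₀ ℕ | (monomial c (1 : K) : MvPolynomial σ K) ∈ I ∧ c ≤ b} := ⟨hb, le_rfl⟩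
  obtain ⟨g, ⟨hgI, hgb⟩, hmin⟩ := hwf.has_min _ ⟨b, hne⟩
  refine ⟨g, ⟨hgI, fun c hcI hcg => ?_⟩, hgb⟩
  by_contra hne'
  exact hmin c ⟨hcI, hcg.trans hgb⟩ (lt_of_le_of_ne hcg hne')

theorem aux_mem_iff_minGens {I : Ideal (MvPolynomial σ K)} (hmon : IsMonomialIdeal I)
    (b : σ →₀ ℕ) :
    (monomial b (1 : K) : MvPolynomial σ K) ∈ I ↔ ∃ g ∈ minGens I, g ≤ b := by
  constructor
  · exact aux_exists_minGen
  · rintro ⟨g, hg, hgb⟩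
    have : (monomial b (1 : K) : MvPolynomial σ K) = monomial (b - g) 1 * monomial g 1 := by
      rw [monomial_mul, one_mul, tsub_add_cancel_of_le hgb]
    rw [this]
    exact Ideal.mul_mem_left _ _ hg.1

theorem aux_ker (K : Type*) [Field K] (σ : Type*) :
    Ideal.span (Set.range (X : σ → MvPolynomial σ K)) =
      RingHom.ker (constantCoeff : MvPolynomial σ K →+* K) := by
  apply le_antisymm
  · rw [Ideal.span_le]
    rintro p ⟨l, rfl⟩
    simp [RingHom.mem_ker]
  · intro p hp
    rw [RingHom.mem_ker, constantCoeff_eq] at hp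
    rw [as_sum p]
    apply Ideal.sum_mem
    intro v hv
    have hv0 : v ≠ 0 := by
      rintro rfl
      exact (mem_support_iff.1 hv) hp
    obtain ⟨l, hl⟩ : ∃ l, v l ≠ 0 := by
      by_contra h
      push_neg at h
      exact hv0 (Finsupp.ext h)
    have : (monomial v (coeff v p) : MvPolynomial σ K) =
        monomial (v - Finsupp.single l 1) (coeff v p) * X l := by
      rw [show (X l : MvPolynomial σ K) = monomial (Finsupp.single l 1) 1 from rfl,
        monomial_mul, mul_one,
        tsub_add_cancel_of_le (Finsupp.single_le_iff.2 (Nat.one_le_iff_ne_zero.2 hl))]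
    rw [this]
    exact Ideal.mul_mem_left _ _ (Ideal.subset_span ⟨l, rfl⟩)

/-- The arithmetic membership predicate for our triangle ideal. -/
def MemA (E : Set (ℕ × ℕ)) (c d e f P Q R : ℕ) : Prop :=
  (∃ x ∈ E, x.1 ≤ P ∧ x.2 ≤ Q) ∨ (c ≤ P ∧ d ≤ R) ∨ (e ≤ Q ∧ f ≤ R)

theorem MemA_step {E : Set (ℕ × ℕ)} {c d e f : ℕ}
    (hc : ∀ x ∈ E, x.1 ≤ c) (he : ∀ x ∈ E, x.2 ≤ e) (P Q R : ℕ)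
    (h1 : MemA E c d e f (P + 1) Q R) (h2 : MemA E c d e f P (Q + 1) R)
    (h3 : MemA E c d e f P Q (R + 1)) : MemA E c d e f P Q R := by
  rcases h3 with ⟨x, hx, h⟩ | ⟨hcP, _⟩ | ⟨heQ, _⟩
  · exact Or.inl ⟨x, hx, h⟩
  · rcases h1 with ⟨x, hx, hx1, hx2⟩ | ⟨_, hdR⟩ | h
    · exact Or.inl ⟨x, hx, le_trans (hc x hx) hcP, hx2⟩
    · exact Or.inr (Or.inl ⟨hcP, hdR⟩)
    · exact Or.inr (Or.inr h)
  · rcases h2 with ⟨x, hx, hx1, hx2⟩ | h | ⟨_, hfR⟩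
    · exact Or.inl ⟨x, hx, hx1, le_trans (he x hx) heQ⟩
    · exact Or.inr (Or.inl h)
    · exact Or.inr (Or.inr ⟨heQ, hfR⟩)

theorem MemA_witness {E : Set (ℕ × ℕ)} {c d e f p0 q0 p1 q1 : ℕ}
    (h0 : (p0, q0) ∈ E) (hmax : ∀ x ∈ E, x.1 ≤ p0)
    (h1 : (p1, q1) ∈ E) (hp1 : p1 < p0) (hq01 : q0 < q1)
    (hqmin : ∀ x ∈ E, x.1 < p0 → q1 ≤ x.2)
    (hd : 1 ≤ d) (hf : 1 ≤ f) (hc : c < p0) :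
    ∃ P Q R, ¬ MemA E c d e f P Q R ∧ MemA E c d e f (P + 1) Q R ∧
      MemA E c d e f P (Q + 1) R ∧ MemA E c d e f P Q (R + 1) := by
  have hp0 : 1 ≤ p0 := by omega
  have hq1 : 1 ≤ q1 := by omega
  refine ⟨p0 - 1, q1 - 1, (if e ≤ q1 - 1 then min d f else d) - 1, ?_, ?_, ?_, ?_⟩
  · rintro (⟨x, hx, hxP, hxQ⟩ | ⟨_, hdR⟩ | ⟨heQ, hfR⟩)
    · have := hqmin x hx (by omega)
      omega
    · have := min_le_left d f
      split_ifs at hdR <;> omega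
    · have := min_le_right d f
      split_ifs at hfR heQ <;> omega
  · exact Or.inl ⟨(p0, q0), h0, by omega, by omega⟩
  · exact Or.inl ⟨(p1, q1), h1, by omega, by omega⟩
  · by_cases hcond : e ≤ q1 - 1
    · rcases le_total d f with hdf | hdf
      · refine Or.inr (Or.inl ⟨by omega, ?_⟩)
        rw [if_pos hcond, min_eq_left hdf]
        omega
      · refine Or.inr (Or.inr ⟨hcond, ?_⟩)
        rw [if_pos hcond, min_eq_right hdf]
        omega
    · refine Or.inr (Or.inl ⟨by omega, ?_⟩)
      rw [if_neg hcond]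
      omega

theorem aux_assoc_iff {K : Type*} [Field K] (I : Ideal (MvPolynomial (Fin 3) K))
    (hmon : IsMonomialIdeal I) (i j k : Fin 3)
    (huniv : ∀ u : Fin 3, u = i ∨ u = j ∨ u = k) :
    (Ideal.span {(X i : MvPolynomial (Fin 3) K), X j, X k} ∈
      associatedPrimes (MvPolynomial (Fin 3) K) (MvPolynomial (Fin 3) K ⧸ I)) ↔
    ∃ u : Fin 3 →₀ ℕ, (monomial u (1 : K) : MvPolynomial (Fin 3) K) ∉ I ∧
      ∀ l : Fin 3, (monomial (u + Finsupp.single l 1) (1 : K) : MvPolynomial (Fin 3) K) ∈ I := by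
  have hsets : ({(X i : MvPolynomial (Fin 3) K), X j, X k} : Set _) = Set.range X := by
    ext p
    simp only [Set.mem_insert_iff, Set.mem_singleton_iff, Set.mem_range]
    constructor
    · rintro (rfl | rfl | rfl)
      exacts [⟨i, rfl⟩, ⟨j, rfl⟩, ⟨k, rfl⟩]
    · rintro ⟨u, rfl⟩
      rcases huniv u with rfl | rfl | rfl
      · exact Or.inl rfl
      · exact Or.inr (Or.inl rfl)
      · exact Or.inr (Or.inr rfl)
  have hspan : Ideal.span {(X i : MvPolynomial (Fin 3) K), X j, X k} =
      Ideal.span (Set.range (X : Fin 3 → MvPolynomial (Fin 3) K)) := by rw [hsets]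
  have hsmul : ∀ (g f : MvPolynomial (Fin 3) K),
      g • (Ideal.Quotient.mk I f) = Ideal.Quotient.mk I (g * f) := fun g f => rfl
  constructor
  · intro hP
    obtain ⟨hprime, x, hx⟩ := isAssociatedPrime_iff.1 hP
    obtain ⟨f, rfl⟩ := Ideal.Quotient.mk_surjective x
    have hfI : f ∉ I := by
      intro hf
      have h0 : Ideal.Quotient.mk I f = 0 := Ideal.Quotient.eq_zero_iff_mem.2 hf
      rw [h0] at hx
      exact hprime.ne_top (by rw [hx]; ext r; simp)
    have hXf : ∀ l : Fin 3, (X l : MvPolynomial (Fin 3) K) * f ∈ I := by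
      intro l
      have hXl : (X l : MvPolynomial (Fin 3) K) ∈
          Ideal.span {(X i : MvPolynomial (Fin 3) K), X j, X k} := by
        apply Ideal.subset_span
        rcases huniv l with rfl | rfl | rfl
        · exact Or.inl rfl
        · exact Or.inr (Or.inl rfl)
        · exact Or.inr (Or.inr rfl)
      rw [hx, Submodule.mem_colon_singleton, Submodule.mem_bot, hsmul,
        Ideal.Quotient.eq_zero_iff_mem] at hXl
      exact hXl
    have hterm : ∃ v ∈ f.support, (monomial v (1 : K) : MvPolynomial (Fin 3) K) ∉ I := by
      by_contra h
      push_neg at h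
      apply hfI
      rw [as_sum f]
      apply Ideal.sum_mem
      intro v hv
      have hv1 := h v hv
      have : (monomial v (coeff v f) : MvPolynomial (Fin 3) K) = C (coeff v f) * monomial v 1 := by
        rw [C_mul_monomial, mul_one]
      rw [this]
      exact Ideal.mul_mem_left _ _ hv1
    obtain ⟨v, hv, hvI⟩ := hterm
    refine ⟨v, hvI, fun l => ?_⟩
    have hcoeff : coeff (Finsupp.single l 1 + v) ((X l : MvPolynomial (Fin 3) K) * f)
        = coeff v f := coeff_X_mul v l f
    have := aux_term_mem hmon (hXf l) (by rw [hcoeff]; exact mem_support_iff.1 hv)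
    rwa [add_comm] at this
  · rintro ⟨u, huI, hul⟩
    have hprime : (Ideal.span {(X i : MvPolynomial (Fin 3) K), X j, X k}).IsPrime := by
      rw [hspan, aux_ker]
      exact RingHom.ker_isPrime _
    refine isAssociatedPrime_iff.2 ⟨hprime, Ideal.Quotient.mk I (monomial u 1), le_antisymm ?_ ?_⟩
    · rw [Ideal.span_le]
      have hann : ∀ l : Fin 3, (X l : MvPolynomial (Fin 3) K) ∈
          (Submodule.colon (⊥ : Submodule (MvPolynomial (Fin 3) K) (MvPolynomial (Fin 3) K ⧸ I))
            {Ideal.Quotient.mk I (monomial u (1 : K))}) := by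
        intro l
        rw [Submodule.mem_colon_singleton, Submodule.mem_bot, hsmul, Ideal.Quotient.eq_zero_iff_mem]
        have : (X l : MvPolynomial (Fin 3) K) * monomial u 1 =
            monomial (u + Finsupp.single l 1) 1 := by
          rw [show (X l : MvPolynomial (Fin 3) K) = monomial (Finsupp.single l 1) 1 from rfl,
            monomial_mul, one_mul, add_comm]
        rw [this]
        exact hul l
      rintro p (rfl | rfl | rfl)
      · exact hann i
      · exact hann j
      · exact hann k
    · intro g hg
      rw [Submodule.mem_colon_singleton, Submodule.mem_bot, hsmul,
        Ideal.Quotient.eq_zero_iff_mem] at hg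
      rw [hspan, aux_ker, RingHom.mem_ker]
      by_contra hc0
      have hco : coeff u (g * monomial u (1 : K)) ≠ 0 := by
        rw [coeff_mul_monomial', if_pos le_rfl, tsub_self, mul_one]
        rwa [constantCoeff_eq] at hc0
      exact huI (aux_term_mem hmon hg hco)

end AuxLemmas
theorem stmt17 {K : Type*} [Field K] (I : Ideal (MvPolynomial (Fin 3) K))
    (hmon : IsMonomialIdeal I) (h2 : IsSupportTwo I)
    (i j k : Fin 3) (hij : i ≠ j) (hjk : j ≠ k) (hik : i ≠ k)
    (htri : ∀ u v : Fin 3, (underGraph I).Adj u v ↔ u ≠ v)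
    (wik wki wjk wkj : ℕ) (h1 : 1 ≤ wik) (h2' : 1 ≤ wki) (h3 : 1 ≤ wjk) (h4 : 1 ≤ wkj)
    (hik' : supportedOn I i k = {Finsupp.single i wik + Finsupp.single k wki})
    (hjk' : supportedOn I j k = {Finsupp.single j wjk + Finsupp.single k wkj})
    (a b : Fin 3 →₀ ℕ) (ha : a ∈ supportedOn I i j)
    (hb : b ∈ supportedOn I i j) (hab : a ≠ b) :
    (Ideal.span {(X i : MvPolynomial (Fin 3) K), X j, X k} ∉
      associatedPrimes (MvPolynomial (Fin 3) K) (MvPolynomial (Fin 3) K ⧸ I)) ↔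
    (muExp I i j ≤ wik ∧ muExp I j i ≤ wjk) := by
  classical
  have huniv : ∀ u : Fin 3, u = i ∨ u = j ∨ u = k := by
    intro u
    have hcard : ({i, j, k} : Finset (Fin 3)) = Finset.univ := by
      apply Finset.eq_univ_of_card
      rw [Finset.card_insert_of_notMem (by simp [hij, hik]),
        Finset.card_insert_of_notMem (by simp [hjk]), Finset.card_singleton]
      simp
    have hu : u ∈ ({i, j, k} : Finset (Fin 3)) := hcard ▸ Finset.mem_univ u
    simpa using hu
  set gik : Fin 3 →₀ ℕ := Finsupp.single i wik + Finsupp.single k wki with hgikdef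
  set gjk : Fin 3 →₀ ℕ := Finsupp.single j wjk + Finsupp.single k wkj with hgjkdef
  have hgik_i : gik i = wik := by
    simp [hgikdef, Finsupp.single_apply, Ne.symm hik]
  have hgik_j : gik j = 0 := by
    simp [hgikdef, Finsupp.single_apply, hij, Ne.symm hjk]
  have hgik_k : gik k = wki := by
    simp [hgikdef, Finsupp.single_apply, hik]
  have hgjk_i : gjk i = 0 := by
    simp [hgjkdef, Finsupp.single_apply, Ne.symm hij, Ne.symm hik]
  have hgjk_j : gjk j = wjk := by
    simp [hgjkdef, Finsupp.single_apply, Ne.symm hjk]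
  have hgjk_k : gjk k = wkj := by
    simp [hgjkdef, Finsupp.single_apply, hjk]
  have hgikG : gik ∈ supportedOn I i k := by rw [hik']; rfl
  have hgjkG : gjk ∈ supportedOn I j k := by rw [hjk']; rfl
  have classify : ∀ g ∈ minGens I, g ∈ supportedOn I i j ∨ g = gik ∨ g = gjk := by
    intro g hg
    obtain ⟨u, v, huv, hsup⟩ := Finset.card_eq_two.1 (h2 g hg)
    rcases huniv u with hu | hu | hu <;> rcases huniv v with hv | hv | hv <;>
      rw [hu, hv] at hsup huv
    · exact absurd rfl huv
    · exact Or.inl ⟨hg, hsup⟩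
    · refine Or.inr (Or.inl ?_)
      have hmem : g ∈ supportedOn I i k := ⟨hg, hsup⟩
      rwa [hik', Set.mem_singleton_iff] at hmem
    · exact Or.inl ⟨hg, by rw [hsup, Finset.pair_comm]⟩
    · exact absurd rfl huv
    · refine Or.inr (Or.inr ?_)
      have hmem : g ∈ supportedOn I j k := ⟨hg, hsup⟩
      rwa [hjk', Set.mem_singleton_iff] at hmem
    · refine Or.inr (Or.inl ?_)
      have hmem : g ∈ supportedOn I i k := ⟨hg, by rw [hsup, Finset.pair_comm]⟩
      rwa [hik', Set.mem_singleton_iff] at hmem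
    · refine Or.inr (Or.inr ?_)
      have hmem : g ∈ supportedOn I j k := ⟨hg, by rw [hsup, Finset.pair_comm]⟩
      rwa [hjk', Set.mem_singleton_iff] at hmem
    · exact absurd rfl huv
  have hmemiff : ∀ u : Fin 3 →₀ ℕ,
      ((monomial u (1 : K) : MvPolynomial (Fin 3) K) ∈ I) ↔
      MemA ((fun g : Fin 3 →₀ ℕ => (g i, g j)) '' supportedOn I i j)
        wik wki wjk wkj (u i) (u j) (u k) := by
    intro u
    rw [aux_mem_iff_minGens hmon]
    constructor
    · rintro ⟨g, hg, hle⟩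
      rcases classify g hg with hG | rfl | rfl
      · exact Or.inl ⟨(g i, g j), ⟨g, hG, rfl⟩, hle i, hle j⟩
      · refine Or.inr (Or.inl ⟨?_, ?_⟩)
        · have := hle i; rwa [hgik_i] at this
        · have := hle k; rwa [hgik_k] at this
      · refine Or.inr (Or.inr ⟨?_, ?_⟩)
        · have := hle j; rwa [hgjk_j] at this
        · have := hle k; rwa [hgjk_k] at this
    · rintro (⟨x, ⟨g, hG, rfl⟩, hx1, hx2⟩ | ⟨hx1, hx2⟩ | ⟨hx1, hx2⟩)
      · refine ⟨g, hG.1, Finsupp.le_def.2 fun s => ?_⟩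
        rcases huniv s with hs | hs | hs <;> rw [hs]
        · exact hx1
        · exact hx2
        · have hk0 : g k = 0 := Finsupp.notMem_support_iff.1
            (by rw [hG.2]; simp [Ne.symm hik, Ne.symm hjk])
          rw [hk0]; exact Nat.zero_le _
      · refine ⟨gik, hgikG.1, Finsupp.le_def.2 fun s => ?_⟩
        rcases huniv s with hs | hs | hs <;> rw [hs]
        · rw [hgik_i]; exact hx1
        · rw [hgik_j]; exact Nat.zero_le _
        · rw [hgik_k]; exact hx2
      · refine ⟨gjk, hgjkG.1, Finsupp.le_def.2 fun s => ?_⟩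
        rcases huniv s with hs | hs | hs <;> rw [hs]
        · rw [hgjk_i]; exact Nat.zero_le _
        · rw [hgjk_j]; exact hx1
        · rw [hgjk_k]; exact hx2
  have coordadd : ∀ (u : Fin 3 →₀ ℕ) (l s : Fin 3),
      ((u + Finsupp.single l 1 : Fin 3 →₀ ℕ)) s = u s + if l = s then 1 else 0 := by
    intro u l s
    rw [Finsupp.add_apply, Finsupp.single_apply]
  have hW : (∃ u : Fin 3 →₀ ℕ, (monomial u (1 : K) : MvPolynomial (Fin 3) K) ∉ I ∧
        ∀ l : Fin 3, (monomial (u + Finsupp.single l 1) (1 : K) : MvPolynomial (Fin 3) K) ∈ I) ↔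
      (∃ P Q R : ℕ,
        ¬ MemA ((fun g : Fin 3 →₀ ℕ => (g i, g j)) '' supportedOn I i j) wik wki wjk wkj P Q R ∧
        MemA ((fun g : Fin 3 →₀ ℕ => (g i, g j)) '' supportedOn I i j) wik wki wjk wkj (P+1) Q R ∧
        MemA ((fun g : Fin 3 →₀ ℕ => (g i, g j)) '' supportedOn I i j) wik wki wjk wkj P (Q+1) R ∧
        MemA ((fun g : Fin 3 →₀ ℕ => (g i, g j)) '' supportedOn I i j) wik wki wjk wkj P Q (R+1)) := by
    constructor
    · rintro ⟨u, hu, hl⟩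
      refine ⟨u i, u j, u k, fun h => hu ((hmemiff u).2 h), ?_, ?_, ?_⟩
      · have hh := (hmemiff _).1 (hl i)
        rw [coordadd, coordadd, coordadd, if_pos rfl, if_neg hij, if_neg hik] at hh
        simpa using hh
      · have hh := (hmemiff _).1 (hl j)
        rw [coordadd, coordadd, coordadd, if_neg (Ne.symm hij), if_pos rfl, if_neg hjk] at hh
        simpa using hh
      · have hh := (hmemiff _).1 (hl k)
        rw [coordadd, coordadd, coordadd, if_neg (Ne.symm hik), if_neg (Ne.symm hjk),
          if_pos rfl] at hh
        simpa using hh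
    · rintro ⟨P, Q, R, h0, hiM, hjM, hkM⟩
      obtain ⟨u, cI, cJ, cK⟩ : ∃ u : Fin 3 →₀ ℕ, u i = P ∧ u j = Q ∧ u k = R := by
        refine ⟨Finsupp.single i P + Finsupp.single j Q + Finsupp.single k R, ?_, ?_, ?_⟩ <;>
          simp [Finsupp.add_apply, Finsupp.single_apply, hij, hik, hjk,
            Ne.symm hij, Ne.symm hik, Ne.symm hjk]
      refine ⟨u, ?_, ?_⟩
      · intro hmem
        have hh := (hmemiff u).1 hmem
        rw [cI, cJ, cK] at hh
        exact h0 hh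
      · intro l
        apply (hmemiff _).2
        rcases huniv l with hl | hl | hl <;> rw [hl]
        · rw [coordadd, coordadd, coordadd, if_pos rfl, if_neg hij, if_neg hik, cI, cJ, cK]
          simpa using hiM
        · rw [coordadd, coordadd, coordadd, if_neg (Ne.symm hij), if_pos rfl, if_neg hjk,
            cI, cJ, cK]
          simpa using hjM
        · rw [coordadd, coordadd, coordadd, if_neg (Ne.symm hik), if_neg (Ne.symm hjk),
            if_pos rfl, cI, cJ, cK]
          simpa using hkM
  have haiff := aux_assoc_iff I hmon i j k huniv
  have hanti : ∀ g ∈ minGens I, ∀ h ∈ minGens I, g ≤ h → g = h :=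
    fun g hg h hh hle => hh.2 g hg.1 hle
  have hle_of : ∀ g ∈ supportedOn I i j, ∀ h : Fin 3 →₀ ℕ, g i ≤ h i → g j ≤ h j → g ≤ h := by
    intro g hg h hh1 hh2
    refine Finsupp.le_def.2 fun s => ?_
    rcases huniv s with hs | hs | hs <;> rw [hs]
    · exact hh1
    · exact hh2
    · have hk0 : g k = 0 := Finsupp.notMem_support_iff.1
        (by rw [hg.2]; simp [Ne.symm hik, Ne.symm hjk])
      rw [hk0]; exact Nat.zero_le _
  obtain ⟨g0, hg0G, hg0j⟩ := Nat.sInf_mem (⟨a j, a, ha, rfl⟩ :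
    ((fun g : Fin 3 →₀ ℕ => g j) '' supportedOn I i j).Nonempty)
  replace hg0j : g0 j = sInf ((fun g : Fin 3 →₀ ℕ => g j) '' supportedOn I i j) := hg0j
  have hg0min : ∀ g ∈ supportedOn I i j, g0 j ≤ g j := by
    intro g hg
    rw [hg0j]; exact Nat.sInf_le ⟨g, hg, rfl⟩
  have hmaxi : ∀ g ∈ supportedOn I i j, g i ≤ g0 i := by
    intro g hg
    by_contra hlt
    push_neg at hlt
    have hle := hle_of g0 hg0G g (le_of_lt hlt) (hg0min g hg)
    have heq := hanti g0 hg0G.1 g hg.1 hle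
    rw [heq] at hlt
    exact lt_irrefl _ hlt
  have hnei : ∀ g ∈ supportedOn I i j, g ≠ g0 → g i < g0 i := by
    intro g hg hne
    rcases lt_or_eq_of_le (hmaxi g hg) with h | h
    · exact h
    · exfalso
      rcases le_total (g j) (g0 j) with hj' | hj'
      · exact hne (hanti g hg.1 g0 hg0G.1 (hle_of g hg g0 h.le hj'))
      · exact hne ((hanti g0 hg0G.1 g hg.1 (hle_of g0 hg0G g h.ge hj')).symm)
  obtain ⟨k0, hk0G, hk0i⟩ := Nat.sInf_mem (⟨a i, a, ha, rfl⟩ :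
    ((fun g : Fin 3 →₀ ℕ => g i) '' supportedOn I i j).Nonempty)
  replace hk0i : k0 i = sInf ((fun g : Fin 3 →₀ ℕ => g i) '' supportedOn I i j) := hk0i
  have hk0min : ∀ g ∈ supportedOn I i j, k0 i ≤ g i := by
    intro g hg
    rw [hk0i]; exact Nat.sInf_le ⟨g, hg, rfl⟩
  have hmaxj : ∀ g ∈ supportedOn I i j, g j ≤ k0 j := by
    intro g hg
    by_contra hlt
    push_neg at hlt
    have hle := hle_of k0 hk0G g (hk0min g hg) (le_of_lt hlt)
    have heq := hanti k0 hk0G.1 g hg.1 hle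
    rw [heq] at hlt
    exact lt_irrefl _ hlt
  have hnej : ∀ g ∈ supportedOn I i j, g ≠ k0 → g j < k0 j := by
    intro g hg hne
    rcases lt_or_eq_of_le (hmaxj g hg) with h | h
    · exact h
    · exfalso
      rcases le_total (g i) (k0 i) with hi' | hi'
      · exact hne (hanti g hg.1 k0 hk0G.1 (hle_of g hg k0 hi' h.le))
      · exact hne ((hanti k0 hk0G.1 g hg.1 (hle_of k0 hk0G g hi' h.ge)).symm)
  have hmu1 : muExp I i j = g0 i := by
    have hg : IsGreatest ((fun a : Fin 3 →₀ ℕ => a i) '' supportedOn I i j) (g0 i) :=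
      ⟨⟨g0, hg0G, rfl⟩, by rintro x ⟨g, hg, rfl⟩; exact hmaxi g hg⟩
    exact hg.csSup_eq
  have hmu2 : muExp I j i = k0 j := by
    have hsame : supportedOn I j i = supportedOn I i j := by
      ext g
      constructor
      · rintro ⟨hh1, hh2⟩; exact ⟨hh1, by rw [hh2, Finset.pair_comm]⟩
      · rintro ⟨hh1, hh2⟩; exact ⟨hh1, by rw [hh2, Finset.pair_comm]⟩
    have hg : IsGreatest ((fun a : Fin 3 →₀ ℕ => a j) '' supportedOn I j i) (k0 j) := by
      rw [hsame]
      exact ⟨⟨k0, hk0G, rfl⟩, by rintro x ⟨g, hg, rfl⟩; exact hmaxj g hg⟩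
    exact hg.csSup_eq
  rw [hmu1, hmu2]
  have key : (Ideal.span {(X i : MvPolynomial (Fin 3) K), X j, X k} ∉
      associatedPrimes (MvPolynomial (Fin 3) K) (MvPolynomial (Fin 3) K ⧸ I)) ↔
      ¬ (∃ P Q R : ℕ,
        ¬ MemA ((fun g : Fin 3 →₀ ℕ => (g i, g j)) '' supportedOn I i j) wik wki wjk wkj P Q R ∧
        MemA ((fun g : Fin 3 →₀ ℕ => (g i, g j)) '' supportedOn I i j) wik wki wjk wkj (P+1) Q R ∧
        MemA ((fun g : Fin 3 →₀ ℕ => (g i, g j)) '' supportedOn I i j) wik wki wjk wkj P (Q+1) R ∧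
        MemA ((fun g : Fin 3 →₀ ℕ => (g i, g j)) '' supportedOn I i j) wik wki wjk wkj P Q (R+1)) :=
    not_congr (haiff.trans hW)
  rw [key]
  constructor
  · intro hnw
    by_contra hcon
    rw [not_and_or] at hcon
    push_neg at hcon
    rcases hcon with hcase | hcase
    · obtain ⟨g1', hg1'G, hg1'lt⟩ : ∃ g ∈ supportedOn I i j, g i < g0 i := by
        by_cases hag : a = g0
        · exact ⟨b, hb, hnei b hb (fun h => hab (hag.trans h.symm))⟩
        · exact ⟨a, ha, hnei a ha hag⟩
      obtain ⟨g1, hg1mem, hg1j⟩ := Nat.sInf_mem (⟨g1' j, g1', ⟨hg1'G, hg1'lt⟩, rfl⟩ :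
        ((fun g : Fin 3 →₀ ℕ => g j) '' {g ∈ supportedOn I i j | g i < g0 i}).Nonempty)
      obtain ⟨hg1G, hg1lt⟩ := hg1mem
      replace hg1j : g1 j =
        sInf ((fun g : Fin 3 →₀ ℕ => g j) '' {g ∈ supportedOn I i j | g i < g0 i}) := hg1j
      have hq01 : g0 j < g1 j := by
        rcases lt_or_eq_of_le (hg0min g1 hg1G) with h | h
        · exact h
        · exfalso
          have hle := hle_of g1 hg1G g0 (le_of_lt hg1lt) h.ge
          have heq := hanti g1 hg1G.1 g0 hg0G.1 hle
          rw [heq] at hg1lt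
          exact lt_irrefl _ hg1lt
      have hqmin : ∀ x ∈ (fun g : Fin 3 →₀ ℕ => (g i, g j)) '' supportedOn I i j,
          x.1 < g0 i → g1 j ≤ x.2 := by
        rintro x ⟨g, hg, rfl⟩ hlt
        rw [hg1j]; exact Nat.sInf_le ⟨g, ⟨hg, hlt⟩, rfl⟩
      obtain ⟨P, Q, R, w0, w1, w2, w3⟩ := MemA_witness (e := wjk)
        (⟨g0, hg0G, rfl⟩ : (g0 i, g0 j) ∈ (fun g : Fin 3 →₀ ℕ => (g i, g j)) '' supportedOn I i j)
        (by rintro x ⟨g, hg, rfl⟩; exact hmaxi g hg)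
        (⟨g1, hg1G, rfl⟩ : (g1 i, g1 j) ∈ (fun g : Fin 3 →₀ ℕ => (g i, g j)) '' supportedOn I i j)
        hg1lt hq01 hqmin h2' h4 hcase
      exact hnw ⟨P, Q, R, w0, w1, w2, w3⟩
    · have hswap : ∀ P Q R : ℕ,
          MemA ((fun g : Fin 3 →₀ ℕ => (g j, g i)) '' supportedOn I i j) wjk wkj wik wki P Q R ↔
          MemA ((fun g : Fin 3 →₀ ℕ => (g i, g j)) '' supportedOn I i j) wik wki wjk wkj Q P R := by
        intro P Q R
        constructor
        · rintro (⟨x, ⟨g, hg, rfl⟩, hx1, hx2⟩ | h | h)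
          · exact Or.inl ⟨(g i, g j), ⟨g, hg, rfl⟩, hx2, hx1⟩
          · exact Or.inr (Or.inr h)
          · exact Or.inr (Or.inl h)
        · rintro (⟨x, ⟨g, hg, rfl⟩, hx1, hx2⟩ | h | h)
          · exact Or.inl ⟨(g j, g i), ⟨g, hg, rfl⟩, hx2, hx1⟩
          · exact Or.inr (Or.inr h)
          · exact Or.inr (Or.inl h)
      obtain ⟨g1', hg1'G, hg1'lt⟩ : ∃ g ∈ supportedOn I i j, g j < k0 j := by
        by_cases hag : a = k0
        · exact ⟨b, hb, hnej b hb (fun h => hab (hag.trans h.symm))⟩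
        · exact ⟨a, ha, hnej a ha hag⟩
      obtain ⟨g1, hg1mem, hg1i⟩ := Nat.sInf_mem (⟨g1' i, g1', ⟨hg1'G, hg1'lt⟩, rfl⟩ :
        ((fun g : Fin 3 →₀ ℕ => g i) '' {g ∈ supportedOn I i j | g j < k0 j}).Nonempty)
      obtain ⟨hg1G, hg1lt⟩ := hg1mem
      replace hg1i : g1 i =
        sInf ((fun g : Fin 3 →₀ ℕ => g i) '' {g ∈ supportedOn I i j | g j < k0 j}) := hg1i
      have hq01 : k0 i < g1 i := by
        rcases lt_or_eq_of_le (hk0min g1 hg1G) with h | h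
        · exact h
        · exfalso
          have hle := hle_of g1 hg1G k0 h.ge (le_of_lt hg1lt)
          have heq := hanti g1 hg1G.1 k0 hk0G.1 hle
          rw [heq] at hg1lt
          exact lt_irrefl _ hg1lt
      have hqmin : ∀ x ∈ (fun g : Fin 3 →₀ ℕ => (g j, g i)) '' supportedOn I i j,
          x.1 < k0 j → g1 i ≤ x.2 := by
        rintro x ⟨g, hg, rfl⟩ hlt
        rw [hg1i]; exact Nat.sInf_le ⟨g, ⟨hg, hlt⟩, rfl⟩
      obtain ⟨P, Q, R, w0, w1, w2, w3⟩ := MemA_witness (e := wik)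
        (⟨k0, hk0G, rfl⟩ : (k0 j, k0 i) ∈ (fun g : Fin 3 →₀ ℕ => (g j, g i)) '' supportedOn I i j)
        (by rintro x ⟨g, hg, rfl⟩; exact hmaxj g hg)
        (⟨g1, hg1G, rfl⟩ : (g1 j, g1 i) ∈ (fun g : Fin 3 →₀ ℕ => (g j, g i)) '' supportedOn I i j)
        hg1lt hq01 hqmin h4 h2' hcase
      exact hnw ⟨Q, P, R, fun h => w0 ((hswap P Q R).2 h),
        (hswap P (Q+1) R).1 w2, (hswap (P+1) Q R).1 w1, (hswap P Q (R+1)).1 w3⟩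
  · rintro ⟨hm1, hm2⟩ ⟨P, Q, R, w0, w1, w2, w3⟩
    refine w0 (MemA_step ?_ ?_ P Q R w1 w2 w3)
    · rintro x ⟨g, hg, rfl⟩
      exact le_trans (hmaxi g hg) hm1
    · rintro x ⟨g, hg, rfl⟩
      exact le_trans (hmaxj g hg) hm2
end
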